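/- arXiv:2311.10006 — 6 statements merged into one kernel-verified Lean document; each statement's English description precedes it below -/
import Mathlib

section
/- Let α > 0. For every Schwartz function φ on ℝ^d, the function L(φ) := e^{φ/α} - 1 is again a Schwartz function and satisfies L(φ)(x) > -1 for all x ∈ ℝ^d; moreover, the map φ ↦ e^{φ/α} - 1 is continuous from the Schwartz space S to itself. -/
open MeasureTheory Real Filter Set

noncomputable section

/-- Euclidean space `ℝ^d`. -/
abbrev Euc (d : ℕ) := EuclideanSpace ℝ (Fin d)

/-- The heat semigroup `P_t` with generator `(α/2)Δ`: for `t > 0` it is given by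
convolution with the Gaussian kernel of variance `αt`, and `P_0 f = f`. -/
def heatP (d : ℕ) (α t : ℝ) (f : Euc d → ℝ) (x : Euc d) : ℝ :=
  if t = 0 then f x
  else ∫ y : Euc d, (2 * π * α * t) ^ (-(d : ℝ) / 2) *
    Real.exp (-‖x - y‖ ^ 2 / (2 * α * t)) * f y

/-- The Laplacian of `f : ℝ^d → ℝ`, as the sum of the second partial derivatives in the
coordinate directions. -/
def lap (d : ℕ) (f : Euc d → ℝ) (x : Euc d) : ℝ :=
  ∑ i : Fin d, fderiv ℝ (fun y => fderiv ℝ f y (EuclideanSpace.single i 1)) x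
    (EuclideanSpace.single i 1)

/-- The Cole–Hopf transform `V_t φ = -α ln (P_t e^{-φ/α})`. -/
def coleHopf (d : ℕ) (α t : ℝ) (φ : Euc d → ℝ) (x : Euc d) : ℝ :=
  -α * Real.log (heatP d α t (fun y => Real.exp (-φ y / α)) x)

/-- A tempered measure: a locally finite Borel measure integrating every Schwartz function. -/
def IsTempered {d : ℕ} (μ : Measure (Euc d)) : Prop :=
  IsLocallyFiniteMeasure μ ∧ ∀ φ : SchwartzMap (Euc d) ℝ, Integrable (fun x => φ x) μ

/-- The Gaussian measure on `ℝ^d` with mean `m` and covariance `t • Id`, defined through its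
density with respect to Lebesgue measure. -/
def gaussE (d : ℕ) (m : Euc d) (t : ℝ) : Measure (Euc d) :=
  volume.withDensity fun x =>
    ENNReal.ofReal ((2 * π * t) ^ (-(d : ℝ) / 2) * Real.exp (-‖x - m‖ ^ 2 / (2 * t)))

/-- The unit cube `[0,1]^d`. -/
def unitCube (d : ℕ) : Set (Euc d) := {x | ∀ i, x i ∈ Set.Icc (0 : ℝ) 1}

/-- First-order partial derivative in direction `i`. -/
def pderivI {d : ℕ} (i : Fin d) (f : Euc d → ℝ) (x : Euc d) : ℝ :=
  fderiv ℝ f x (EuclideanSpace.single i 1)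

/-- Iterated partial derivative in direction `i`. -/
def pderivIter {d : ℕ} (i : Fin d) : ℕ → (Euc d → ℝ) → Euc d → ℝ
  | 0, f => f
  | n + 1, f => pderivI i (pderivIter i n f)

/-- The partial derivative `D^β` for a multi-index `β`. -/
def Dmulti {d : ℕ} (β : Fin d → ℕ) (f : Euc d → ℝ) : Euc d → ℝ :=
  (List.finRange d).foldr (fun i g => pderivIter i (β i) g) f

section
open Real Filter Topology
namespace St5

variable {E : Type*} [NormedAddCommGroup E] [NormedSpace ℝ E]

lemma contDiff_expDiv (α : ℝ) : ContDiff ℝ ((⊤ : ℕ∞) : WithTop ℕ∞) (fun t : ℝ => Real.exp (t / α)) :=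
  Real.contDiff_exp.comp (contDiff_id.div_const α)

lemma iteratedDeriv_expDiv (α : ℝ) (n : ℕ) :
    iteratedDeriv n (fun t : ℝ => Real.exp (t / α)) = fun t => α⁻¹ ^ n * Real.exp (t / α) := by
  induction n with
  | zero => simp
  | succ n ih =>
    rw [iteratedDeriv_succ, ih]
    funext t
    have h1 : HasDerivAt (fun t : ℝ => Real.exp (t / α)) (Real.exp (t / α) * (1 / α)) t :=
      ((hasDerivAt_id t).div_const α).exp
    have h2 : HasDerivAt (fun t : ℝ => α⁻¹ ^ n * Real.exp (t / α))
        (α⁻¹ ^ n * (Real.exp (t / α) * (1 / α))) t := h1.const_mul _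
    rw [h2.deriv]
    ring

lemma norm_iteratedFDeriv_expDiv {α : ℝ} (hα : 0 < α) (n : ℕ) (t : ℝ) :
    ‖iteratedFDeriv ℝ n (fun t : ℝ => Real.exp (t / α)) t‖ = α⁻¹ ^ n * Real.exp (t / α) := by
  rw [norm_iteratedFDeriv_eq_norm_iteratedDeriv, iteratedDeriv_expDiv]
  rw [Real.norm_eq_abs, abs_of_nonneg (by positivity)]

lemma abs_exp_sub_exp_le {a b c : ℝ} (ha : a ≤ c) (hb : b ≤ c) :
    |Real.exp a - Real.exp b| ≤ Real.exp c * |a - b| := by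
  wlog hab : b ≤ a generalizing a b
  · rw [abs_sub_comm, abs_sub_comm a b]; exact this hb ha (le_of_not_ge hab)
  rw [abs_of_nonneg (sub_nonneg.2 (Real.exp_le_exp.2 hab)), abs_of_nonneg (sub_nonneg.2 hab)]
  have h1 : Real.exp (a - b) * Real.exp (b - a) = 1 := by
    rw [← Real.exp_add]; simp
  have h2 : (b - a) + 1 ≤ Real.exp (b - a) := by
    have := Real.add_one_le_exp (b - a); linarith
  have h3 : Real.exp b * Real.exp (a - b) = Real.exp a := by
    rw [← Real.exp_add]; ring_nf
  have h4 : Real.exp a ≤ Real.exp c := Real.exp_le_exp.2 ha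
  have h5 : (0:ℝ) < Real.exp (b - a) := Real.exp_pos _
  have h6 : (0:ℝ) < Real.exp b := Real.exp_pos _
  have h7 : (0:ℝ) < Real.exp (a - b) := Real.exp_pos _
  nlinarith [mul_le_mul_of_nonneg_left h2 h7.le]

lemma norm_iteratedFDeriv_exp_comp_le {α : ℝ} (hα : 0 < α) {f : E → ℝ} (hf : ContDiff ℝ ((⊤ : ℕ∞) : WithTop ℕ∞) f)
    {R : ℝ} {n : ℕ} (hb : ∀ i ≤ n, ∀ x, ‖iteratedFDeriv ℝ i f x‖ ≤ R) {i : ℕ} (hi : i ≤ n)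
    (x : E) :
    ‖iteratedFDeriv ℝ i (fun y => Real.exp (f y / α)) x‖ ≤
      Nat.factorial n * ((max 1 α⁻¹) ^ n * Real.exp (R / α)) * (max 1 R) ^ n := by
  have hR : 0 ≤ R := le_trans (norm_nonneg _) (hb 0 (Nat.zero_le _) x)
  have key := norm_iteratedFDeriv_comp_le (g := fun t : ℝ => Real.exp (t / α)) (f := f)
    (n := i) (N := ((⊤ : ℕ∞) : WithTop ℕ∞)) ((Real.contDiff_exp.comp (contDiff_id.div_const α)).of_le (by exact_mod_cast le_top)) hf (by exact_mod_cast le_top) x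
    (C := (max 1 α⁻¹) ^ n * Real.exp (R / α)) (D := max 1 R)
    (fun j hj => by
      rw [norm_iteratedFDeriv_expDiv hα]
      have h1 : α⁻¹ ^ j ≤ (max 1 α⁻¹) ^ n :=
        le_trans (pow_le_pow_left₀ (by positivity) (le_max_right 1 α⁻¹) j)
          (pow_le_pow_right₀ (le_max_left 1 α⁻¹) (le_trans hj hi))
      have h2 : Real.exp (f x / α) ≤ Real.exp (R / α) := by
        have : f x ≤ R := le_trans (le_abs_self _)
          (by simpa [Real.norm_eq_abs] using (by simpa using hb 0 (Nat.zero_le _) x : ‖f x‖ ≤ R))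
        exact Real.exp_le_exp.2 (by gcongr)
      exact mul_le_mul h1 h2 (Real.exp_pos _).le (by positivity))
    (fun j h1j hji => by
      calc ‖iteratedFDeriv ℝ j f x‖ ≤ R := hb j (le_trans hji hi) x
        _ ≤ max 1 R := le_max_right 1 R
        _ ≤ (max 1 R) ^ j := le_self_pow₀ (le_max_left 1 R) (by omega))
  calc ‖iteratedFDeriv ℝ i (fun y => Real.exp (f y / α)) x‖
      = ‖iteratedFDeriv ℝ i ((fun t : ℝ => Real.exp (t / α)) ∘ f) x‖ := rfl
    _ ≤ Nat.factorial i * ((max 1 α⁻¹) ^ n * Real.exp (R / α)) * (max 1 R) ^ i := key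
    _ ≤ Nat.factorial n * ((max 1 α⁻¹) ^ n * Real.exp (R / α)) * (max 1 R) ^ n := by
        have e1 : (Nat.factorial i : ℝ) ≤ Nat.factorial n := by
          exact_mod_cast Nat.factorial_le hi
        have e2 : (max 1 R) ^ i ≤ (max 1 R) ^ n := pow_le_pow_right₀ (le_max_left 1 R) hi
        have h0 : (0:ℝ) ≤ (max 1 α⁻¹) ^ n * Real.exp (R / α) := by positivity
        exact mul_le_mul (mul_le_mul_of_nonneg_right e1 h0) e2 (by positivity)
          (by positivity)

lemma fderiv_exp_comp {α : ℝ} {f : E → ℝ} (hf : Differentiable ℝ f) (x : E) :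
    fderiv ℝ (fun y => Real.exp (f y / α)) x
      = (α⁻¹ * Real.exp (f x / α)) • fderiv ℝ f x := by
  have h1 : HasFDerivAt (fun y => f y / α) (α⁻¹ • fderiv ℝ f x) x := by
    simpa [div_eq_inv_mul, smul_smul, Pi.smul_def, smul_eq_mul] using ((hf x).hasFDerivAt.const_smul (α⁻¹ : ℝ))
  have h2 : HasFDerivAt (fun y => Real.exp (f y / α))
      (Real.exp (f x / α) • α⁻¹ • fderiv ℝ f x) x :=
    h1.exp
  rw [h2.fderiv, smul_smul, mul_comm]

lemma key {α : ℝ} (hα : 0 < α) {R : ℝ} (hR : 0 ≤ R) (n : ℕ) :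
    ∃ C : ℝ, 0 ≤ C ∧ ∀ φ ψ : SchwartzMap E ℝ,
      (∀ i ≤ n, ∀ x, ‖iteratedFDeriv ℝ i (⇑φ) x‖ ≤ R) →
      (∀ i ≤ n, ∀ x, ‖iteratedFDeriv ℝ i (⇑ψ) x‖ ≤ R) →
      ∀ m ≤ n, ∀ (k : ℕ) (x : E),
        ‖x‖ ^ k * ‖iteratedFDeriv ℝ m
            (fun y => Real.exp (φ y / α) - Real.exp (ψ y / α)) x‖
          ≤ C * ∑ j ∈ Finset.range (n + 1), SchwartzMap.seminorm ℝ k j (φ - ψ) := by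
  induction n with
  | zero =>
    refine ⟨α⁻¹ * Real.exp (R / α), by positivity, fun φ ψ hφ hψ m hm k x => ?_⟩
    interval_cases m
    have h0 : ‖iteratedFDeriv ℝ 0 (fun y => Real.exp (φ y / α) - Real.exp (ψ y / α)) x‖
        = |Real.exp (φ x / α) - Real.exp (ψ x / α)| := by
      rw [norm_iteratedFDeriv_zero]; rfl
    have hφx : φ x / α ≤ R / α := by
      have : φ x ≤ R := le_trans (le_abs_self _)
        (by simpa [Real.norm_eq_abs] using
          (by simpa using hφ 0 le_rfl x : ‖iteratedFDeriv ℝ 0 (⇑φ) x‖ ≤ R))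
      gcongr
    have hψx : ψ x / α ≤ R / α := by
      have : ψ x ≤ R := le_trans (le_abs_self _)
        (by simpa [Real.norm_eq_abs] using
          (by simpa using hψ 0 le_rfl x : ‖iteratedFDeriv ℝ 0 (⇑ψ) x‖ ≤ R))
      gcongr
    have h1 : |Real.exp (φ x / α) - Real.exp (ψ x / α)|
        ≤ Real.exp (R / α) * (α⁻¹ * |φ x - ψ x|) := by
      have := abs_exp_sub_exp_le hφx hψx
      rw [div_sub_div_same, abs_div, abs_of_pos hα] at this
      calc |Real.exp (φ x / α) - Real.exp (ψ x / α)|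
          ≤ Real.exp (R / α) * (|φ x - ψ x| / α) := this
        _ = Real.exp (R / α) * (α⁻¹ * |φ x - ψ x|) := by ring
    have h2 : ‖x‖ ^ k * ‖(φ - ψ) x‖ ≤ SchwartzMap.seminorm ℝ k 0 (φ - ψ) := by
      have := SchwartzMap.le_seminorm ℝ k 0 (φ - ψ) x
      rwa [norm_iteratedFDeriv_zero] at this
    have h3 : ‖(φ - ψ) x‖ = |φ x - ψ x| := by
      simp [SchwartzMap.sub_apply, Real.norm_eq_abs]
    calc ‖x‖ ^ k * ‖iteratedFDeriv ℝ 0 (fun y => Real.exp (φ y / α) - Real.exp (ψ y / α)) x‖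
        = ‖x‖ ^ k * |Real.exp (φ x / α) - Real.exp (ψ x / α)| := by rw [h0]
      _ ≤ ‖x‖ ^ k * (Real.exp (R / α) * (α⁻¹ * |φ x - ψ x|)) := by
          exact mul_le_mul_of_nonneg_left h1 (by positivity)
      _ = (α⁻¹ * Real.exp (R / α)) * (‖x‖ ^ k * |φ x - ψ x|) := by ring
      _ ≤ (α⁻¹ * Real.exp (R / α)) * SchwartzMap.seminorm ℝ k 0 (φ - ψ) := by
          refine mul_le_mul_of_nonneg_left ?_ (by positivity)
          rw [← h3]; exact h2
      _ ≤ (α⁻¹ * Real.exp (R / α)) *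
            ∑ j ∈ Finset.range (0 + 1), SchwartzMap.seminorm ℝ k j (φ - ψ) := by
          simp
  | succ n IH =>
    obtain ⟨C0, hC00, hIH⟩ := IH
    set K : ℝ := Nat.factorial n * ((max 1 α⁻¹) ^ n * Real.exp (R / α)) * (max 1 R) ^ n with hK
    have hK0 : 0 ≤ K := by positivity
    set S : ℝ := ∑ i ∈ Finset.range (n + 1), (n.choose i : ℝ) with hS
    have hS0 : 0 ≤ S := Finset.sum_nonneg fun i _ => by positivity
    refine ⟨C0 + α⁻¹ * S * (K + C0 * R), by positivity, fun φ ψ hφ hψ m hm k x => ?_⟩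
    have hsn0 : ∀ j, 0 ≤ SchwartzMap.seminorm ℝ k j (φ - ψ) := fun j => apply_nonneg _ _
    set Ssum : ℝ := ∑ j ∈ Finset.range (n + 1 + 1), SchwartzMap.seminorm ℝ k j (φ - ψ) with hSsum
    have hSsum0 : 0 ≤ Ssum := Finset.sum_nonneg fun j _ => hsn0 j
    have hSle : ∑ j ∈ Finset.range (n + 1), SchwartzMap.seminorm ℝ k j (φ - ψ) ≤ Ssum := by
      rw [hSsum]
      exact Finset.sum_le_sum_of_subset_of_nonneg
        (Finset.range_subset_range.2 (by omega)) (fun j _ _ => hsn0 j)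
    have hφn : ∀ i ≤ n, ∀ x, ‖iteratedFDeriv ℝ i (⇑φ) x‖ ≤ R := fun i hi => hφ i (by omega)
    have hψn : ∀ i ≤ n, ∀ x, ‖iteratedFDeriv ℝ i (⇑ψ) x‖ ≤ R := fun i hi => hψ i (by omega)
    rcases Nat.lt_succ_iff_lt_or_eq.mp (Nat.lt_succ_of_le hm) with hmn | rfl
    · -- m ≤ n : use IH
      have := hIH φ ψ hφn hψn m (by omega) k x
      calc ‖x‖ ^ k * ‖iteratedFDeriv ℝ m
            (fun y => Real.exp (φ y / α) - Real.exp (ψ y / α)) x‖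
          ≤ C0 * ∑ j ∈ Finset.range (n + 1), SchwartzMap.seminorm ℝ k j (φ - ψ) := this
        _ ≤ (C0 + α⁻¹ * S * (K + C0 * R)) * Ssum := by
            refine mul_le_mul (le_add_of_nonneg_right (by positivity)) hSle
              (Finset.sum_nonneg fun j _ => hsn0 j) (by positivity)
    · -- m = n + 1 : main estimate
      have hle : ∀ m : ℕ, ((m : ℕ) : WithTop ℕ∞) ≤ ((⊤ : ℕ∞) : WithTop ℕ∞) := fun m => by
        exact_mod_cast le_top
      have hone : (1 : WithTop ℕ∞) ≤ ((⊤ : ℕ∞) : WithTop ℕ∞) := by exact_mod_cast le_top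
      have hsucc : ∀ m : ℕ, ((m : ℕ) : WithTop ℕ∞) + 1 ≤ ((⊤ : ℕ∞) : WithTop ℕ∞) := fun m => by
        exact_mod_cast le_top
      set g : E → ℝ := fun y => Real.exp (φ y / α) - Real.exp (ψ y / α) with hgdef
      have hφs : ContDiff ℝ ((⊤ : ℕ∞) : WithTop ℕ∞) (⇑φ) := φ.smooth ⊤
      have hψs : ContDiff ℝ ((⊤ : ℕ∞) : WithTop ℕ∞) (⇑ψ) := ψ.smooth ⊤
      have hφψs : ContDiff ℝ ((⊤ : ℕ∞) : WithTop ℕ∞) (⇑(φ - ψ)) := (φ - ψ).smooth ⊤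
      have huφ : ContDiff ℝ ((⊤ : ℕ∞) : WithTop ℕ∞) (fun y => Real.exp (φ y / α)) :=
        (contDiff_expDiv α).comp hφs
      have huψ : ContDiff ℝ ((⊤ : ℕ∞) : WithTop ℕ∞) (fun y => Real.exp (ψ y / α)) :=
        (contDiff_expDiv α).comp hψs
      have hgs : ContDiff ℝ ((⊤ : ℕ∞) : WithTop ℕ∞) g := huφ.sub huψ
      have hder1 : ContDiff ℝ ((n : ℕ) : WithTop ℕ∞) (fderiv ℝ (⇑(φ - ψ))) :=
        hφψs.fderiv_right (hsucc n)
      have hder2 : ContDiff ℝ ((n : ℕ) : WithTop ℕ∞) (fderiv ℝ (⇑ψ)) :=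
        hψs.fderiv_right (hsucc n)
      set F1 : E → (E →L[ℝ] ℝ) := fun z => Real.exp (φ z / α) • fderiv ℝ (⇑(φ - ψ)) z
        with hF1def
      set F2 : E → (E →L[ℝ] ℝ) := fun z => g z • fderiv ℝ (⇑ψ) z with hF2def
      have hF1 : ContDiff ℝ ((n : ℕ) : WithTop ℕ∞) F1 := (huφ.of_le (hle n)).smul hder1
      have hF2 : ContDiff ℝ ((n : ℕ) : WithTop ℕ∞) F2 := (hgs.of_le (hle n)).smul hder2
      have e1 : ‖iteratedFDeriv ℝ (n + 1) g x‖ = ‖iteratedFDeriv ℝ n (fderiv ℝ g) x‖ :=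
        norm_iteratedFDeriv_fderiv.symm
      have hfd : fderiv ℝ g = fun z => α⁻¹ • (F1 z + F2 z) := by
        funext z
        have dφ : Differentiable ℝ (⇑φ) := hφs.differentiable (by simp)
        have dψ : Differentiable ℝ (⇑ψ) := hψs.differentiable (by simp)
        have d1 : DifferentiableAt ℝ (fun y => Real.exp (φ y / α)) z :=
          (huφ.differentiable (by simp)).differentiableAt
        have d2 : DifferentiableAt ℝ (fun y => Real.exp (ψ y / α)) z :=
          (huψ.differentiable (by simp)).differentiableAt
        have e2 : fderiv ℝ g z = fderiv ℝ (fun y => Real.exp (φ y / α)) z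
            - fderiv ℝ (fun y => Real.exp (ψ y / α)) z := fderiv_sub d1 d2
        have e3 : fderiv ℝ (⇑(φ - ψ)) z = fderiv ℝ (⇑φ) z - fderiv ℝ (⇑ψ) z := by
          have hc : ⇑(φ - ψ) = fun w => φ w - ψ w := by
            funext w; simp [SchwartzMap.sub_apply]
          rw [hc]
          exact fderiv_sub (dφ z) (dψ z)
        show _ = α⁻¹ • (F1 z + F2 z)
        rw [e2, fderiv_exp_comp dφ z, fderiv_exp_comp dψ z]
        simp only [hF1def, hF2def, hgdef, e3]
        module
      have e4 : iteratedFDeriv ℝ n (fderiv ℝ g) x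
          = α⁻¹ • iteratedFDeriv ℝ n (fun z => F1 z + F2 z) x := by
        rw [hfd]
        exact iteratedFDeriv_const_smul_apply (a := α⁻¹) (f := fun z => F1 z + F2 z)
          (hF1.add hF2).contDiffAt
      have e5 : iteratedFDeriv ℝ n (fun z => F1 z + F2 z) x
          = iteratedFDeriv ℝ n F1 x + iteratedFDeriv ℝ n F2 x :=
        iteratedFDeriv_add_apply' hF1.contDiffAt hF2.contDiffAt
      have hxk : (0:ℝ) ≤ ‖x‖ ^ k := by positivity
      -- Bound for the F1 part
      have T1 : ‖x‖ ^ k * ‖iteratedFDeriv ℝ n F1 x‖ ≤ S * (K * Ssum) := by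
        have hb1 := norm_iteratedFDeriv_smul_le (𝕜 := ℝ)
          (f := fun z => Real.exp (φ z / α)) (g := fderiv ℝ (⇑(φ - ψ)))
          (huφ.of_le (hle n)) hder1 x (le_refl ((n : ℕ) : WithTop ℕ∞))
        calc ‖x‖ ^ k * ‖iteratedFDeriv ℝ n F1 x‖
            ≤ ‖x‖ ^ k * ∑ i ∈ Finset.range (n + 1), (n.choose i : ℝ)
              * ‖iteratedFDeriv ℝ i (fun z => Real.exp (φ z / α)) x‖
              * ‖iteratedFDeriv ℝ (n - i) (fderiv ℝ (⇑(φ - ψ))) x‖ :=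
              mul_le_mul_of_nonneg_left hb1 hxk
          _ = ∑ i ∈ Finset.range (n + 1), (n.choose i : ℝ)
              * ‖iteratedFDeriv ℝ i (fun z => Real.exp (φ z / α)) x‖
              * (‖x‖ ^ k * ‖iteratedFDeriv ℝ (n - i) (fderiv ℝ (⇑(φ - ψ))) x‖) := by
              rw [Finset.mul_sum]; congr 1; funext i; ring
          _ ≤ ∑ i ∈ Finset.range (n + 1), (n.choose i : ℝ) * (K * Ssum) := by
              refine Finset.sum_le_sum fun i hi => ?_
              have hiK : ‖iteratedFDeriv ℝ i (fun z => Real.exp (φ z / α)) x‖ ≤ K :=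
                norm_iteratedFDeriv_exp_comp_le hα hφs hφn
                  (Nat.lt_succ_iff.mp (Finset.mem_range.mp hi)) x
              have hsem : ‖x‖ ^ k * ‖iteratedFDeriv ℝ (n - i) (fderiv ℝ (⇑(φ - ψ))) x‖
                  ≤ Ssum := by
                rw [norm_iteratedFDeriv_fderiv]
                refine le_trans (SchwartzMap.le_seminorm ℝ k (n - i + 1) (φ - ψ) x) ?_
                refine Finset.single_le_sum (fun j _ => hsn0 j) ?_
                exact Finset.mem_range.mpr (by omega)
              have h1 : (0:ℝ) ≤ (n.choose i : ℝ) := by positivity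
              calc (n.choose i : ℝ)
                  * ‖iteratedFDeriv ℝ i (fun z => Real.exp (φ z / α)) x‖
                  * (‖x‖ ^ k * ‖iteratedFDeriv ℝ (n - i) (fderiv ℝ (⇑(φ - ψ))) x‖)
                  ≤ (n.choose i : ℝ) * K
                    * (‖x‖ ^ k * ‖iteratedFDeriv ℝ (n - i) (fderiv ℝ (⇑(φ - ψ))) x‖) := by
                    refine mul_le_mul_of_nonneg_right
                      (mul_le_mul_of_nonneg_left hiK h1) (by positivity)
                _ ≤ (n.choose i : ℝ) * K * Ssum :=
                    mul_le_mul_of_nonneg_left hsem (by positivity)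
                _ = (n.choose i : ℝ) * (K * Ssum) := by ring
          _ = S * (K * Ssum) := by rw [hS, ← Finset.sum_mul]
      -- Bound for the F2 part
      have T2 : ‖x‖ ^ k * ‖iteratedFDeriv ℝ n F2 x‖ ≤ S * (C0 * R * Ssum) := by
        have hb2 := norm_iteratedFDeriv_smul_le (𝕜 := ℝ)
          (f := g) (g := fderiv ℝ (⇑ψ))
          (hgs.of_le (hle n)) hder2 x (le_refl ((n : ℕ) : WithTop ℕ∞))
        calc ‖x‖ ^ k * ‖iteratedFDeriv ℝ n F2 x‖
            ≤ ‖x‖ ^ k * ∑ i ∈ Finset.range (n + 1), (n.choose i : ℝ)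
              * ‖iteratedFDeriv ℝ i g x‖
              * ‖iteratedFDeriv ℝ (n - i) (fderiv ℝ (⇑ψ)) x‖ :=
              mul_le_mul_of_nonneg_left hb2 hxk
          _ = ∑ i ∈ Finset.range (n + 1), (n.choose i : ℝ)
              * (‖x‖ ^ k * ‖iteratedFDeriv ℝ i g x‖)
              * ‖iteratedFDeriv ℝ (n - i) (fderiv ℝ (⇑ψ)) x‖ := by
              rw [Finset.mul_sum]; congr 1; funext i; ring
          _ ≤ ∑ i ∈ Finset.range (n + 1), (n.choose i : ℝ) * (C0 * R * Ssum) := by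
              refine Finset.sum_le_sum fun i hi => ?_
              have hin : i ≤ n := Nat.lt_succ_iff.mp (Finset.mem_range.mp hi)
              have hgi : ‖x‖ ^ k * ‖iteratedFDeriv ℝ i g x‖ ≤ C0 * Ssum := by
                refine le_trans (hIH φ ψ hφn hψn i hin k x) ?_
                exact mul_le_mul_of_nonneg_left hSle hC00
              have hψi : ‖iteratedFDeriv ℝ (n - i) (fderiv ℝ (⇑ψ)) x‖ ≤ R := by
                rw [norm_iteratedFDeriv_fderiv]
                exact hψ (n - i + 1) (by omega) x
              have h1 : (0:ℝ) ≤ (n.choose i : ℝ) := by positivity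
              calc (n.choose i : ℝ) * (‖x‖ ^ k * ‖iteratedFDeriv ℝ i g x‖)
                  * ‖iteratedFDeriv ℝ (n - i) (fderiv ℝ (⇑ψ)) x‖
                  ≤ (n.choose i : ℝ) * (C0 * Ssum) * R := by
                    refine mul_le_mul (mul_le_mul_of_nonneg_left hgi h1) hψi
                      (norm_nonneg _) (by positivity)
                _ = (n.choose i : ℝ) * (C0 * R * Ssum) := by ring
          _ = S * (C0 * R * Ssum) := by rw [hS, ← Finset.sum_mul]
      -- Put everything together
      have hgoal : ‖x‖ ^ k * ‖iteratedFDeriv ℝ (n + 1) g x‖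
          ≤ (α⁻¹ * S * (K + C0 * R)) * Ssum := by
        calc ‖x‖ ^ k * ‖iteratedFDeriv ℝ (n + 1) g x‖
            = ‖x‖ ^ k * (α⁻¹ * ‖iteratedFDeriv ℝ n F1 x + iteratedFDeriv ℝ n F2 x‖) := by
              rw [e1, e4, e5]
              rw [norm_smul α⁻¹ (iteratedFDeriv ℝ n F1 x + iteratedFDeriv ℝ n F2 x),
                Real.norm_eq_abs, abs_of_pos (inv_pos.2 hα)]
          _ ≤ ‖x‖ ^ k * (α⁻¹ * (‖iteratedFDeriv ℝ n F1 x‖ + ‖iteratedFDeriv ℝ n F2 x‖)) := by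
              refine mul_le_mul_of_nonneg_left ?_ hxk
              exact mul_le_mul_of_nonneg_left (norm_add_le _ _) (by positivity)
          _ = α⁻¹ * (‖x‖ ^ k * ‖iteratedFDeriv ℝ n F1 x‖
              + ‖x‖ ^ k * ‖iteratedFDeriv ℝ n F2 x‖) := by ring
          _ ≤ α⁻¹ * (S * (K * Ssum) + S * (C0 * R * Ssum)) := by
              refine mul_le_mul_of_nonneg_left (add_le_add T1 T2) (by positivity)
          _ = (α⁻¹ * S * (K + C0 * R)) * Ssum := by ring
      refine le_trans hgoal ?_
      refine mul_le_mul_of_nonneg_right ?_ hSsum0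
      exact le_add_of_nonneg_left hC00

lemma bounds_of_seminorm {φ : SchwartzMap E ℝ} {n : ℕ} {R : ℝ}
    (h : ∀ i ≤ n, SchwartzMap.seminorm ℝ 0 i φ ≤ R) :
    ∀ i ≤ n, ∀ x, ‖iteratedFDeriv ℝ i (⇑φ) x‖ ≤ R := fun i hi x =>
  le_trans (SchwartzMap.norm_iteratedFDeriv_le_seminorm ℝ φ i x) (h i hi)

lemma zero_bounds {n : ℕ} {R : ℝ} (hR : 0 ≤ R) :
    ∀ i ≤ n, ∀ x : E, ‖iteratedFDeriv ℝ i (⇑(0 : SchwartzMap E ℝ)) x‖ ≤ R := by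
  intro i _ x
  have : ⇑(0 : SchwartzMap E ℝ) = fun _ : E => (0 : ℝ) := by
    funext y; simp
  rw [this, iteratedFDeriv_zero_fun]
  simpa using hR

/-- The map `L φ = exp (φ / α) - 1` as a Schwartz function. -/
def Lmap {α : ℝ} (hα : 0 < α) (φ : SchwartzMap E ℝ) : SchwartzMap E ℝ where
  toFun x := Real.exp (φ x / α) - 1
  smooth' := ((contDiff_expDiv α).comp (φ.smooth ⊤)).sub contDiff_const
  decay' := by
    intro k n
    set R : ℝ := ∑ i ∈ Finset.range (n + 1), SchwartzMap.seminorm ℝ 0 i φ with hRdef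
    have hR : 0 ≤ R := Finset.sum_nonneg fun i _ => apply_nonneg _ _
    obtain ⟨C, hC0, hC⟩ := key (E := E) hα hR n
    have hbφ : ∀ i ≤ n, ∀ x, ‖iteratedFDeriv ℝ i (⇑φ) x‖ ≤ R :=
      bounds_of_seminorm fun i hi =>
        Finset.single_le_sum (fun j _ => apply_nonneg _ _) (Finset.mem_range.mpr (by omega))
    have hb0 := zero_bounds (E := E) (n := n) hR
    refine ⟨C * ∑ j ∈ Finset.range (n + 1), SchwartzMap.seminorm ℝ k j (φ - 0), fun x => ?_⟩
    have := hC φ 0 hbφ hb0 n le_rfl k x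
    have hfun : (fun y => Real.exp (φ y / α) - Real.exp ((0 : SchwartzMap E ℝ) y / α))
        = fun y => Real.exp (φ y / α) - 1 := by
      funext y; simp
    rwa [hfun] at this

lemma Lmap_apply {α : ℝ} (hα : 0 < α) (φ : SchwartzMap E ℝ) (x : E) :
    Lmap hα φ x = Real.exp (φ x / α) - 1 := rfl

lemma Lmap_sub_coe {α : ℝ} (hα : 0 < α) (φ ψ : SchwartzMap E ℝ) :
    ⇑(Lmap hα φ - Lmap hα ψ) = fun y => Real.exp (φ y / α) - Real.exp (ψ y / α) := by
  funext y
  simp only [SchwartzMap.sub_apply, Lmap_apply]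
  ring

lemma continuous_Lmap {α : ℝ} (hα : 0 < α) : Continuous (Lmap (E := E) hα) := by
  rw [continuous_iff_continuousAt]
  intro φ₀
  rw [ContinuousAt, ← tendsto_sub_nhds_zero_iff]
  rw [(schwartz_withSeminorms ℝ E ℝ).hasBasis.tendsto_right_iff]
  intro U hU
  obtain ⟨s, r, hr, rfl⟩ := (SeminormFamily.basisSets_iff _).mp hU
  simp only [id_eq]
  set N : ℕ := s.sup (fun q => q.2) with hN
  set R : ℝ := (∑ i ∈ Finset.range (N + 1), SchwartzMap.seminorm ℝ 0 i φ₀) + 1 with hRdef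
  have hR : 0 ≤ R := add_nonneg (Finset.sum_nonneg fun i _ => apply_nonneg _ _) zero_le_one
  -- the eventual smallness facts we need
  have hev1 : ∀ᶠ φ in 𝓝 φ₀, ∀ i ∈ Finset.range (N + 1),
      SchwartzMap.seminorm ℝ 0 i (φ - φ₀) < 1 := by
    rw [Finset.eventually_all]
    intro i _
    have hcont : Continuous fun φ : SchwartzMap E ℝ =>
        SchwartzMap.seminorm ℝ 0 i (φ - φ₀) := by
      have h1 := (schwartz_withSeminorms ℝ E ℝ).continuous_seminorm (0, i)
      exact h1.comp (continuous_id.sub continuous_const)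
    have : Filter.Tendsto (fun φ : SchwartzMap E ℝ =>
        SchwartzMap.seminorm ℝ 0 i (φ - φ₀)) (𝓝 φ₀) (𝓝 0) := by
      have := hcont.tendsto φ₀
      simpa using this
    exact this.eventually_lt_const zero_lt_one
  -- main estimate for each seminorm in s
  have hmain : ∀ q ∈ s, ∀ᶠ φ in 𝓝 φ₀,
      schwartzSeminormFamily ℝ E ℝ q (Lmap hα φ - Lmap hα φ₀) < r := by
    rintro ⟨k, n⟩ hq
    have hnN : n ≤ N := Finset.le_sup (f := fun q : ℕ × ℕ => q.2) hq
    obtain ⟨C, hC0, hC⟩ := key (E := E) hα hR n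
    set δ : ℝ := r / ((n + 1) * (C + 1)) with hδdef
    have hδ : 0 < δ := by
      apply div_pos hr
      positivity
    have hev2 : ∀ᶠ φ in 𝓝 φ₀, ∀ m ∈ Finset.range (n + 1),
        SchwartzMap.seminorm ℝ k m (φ - φ₀) < δ := by
      rw [Finset.eventually_all]
      intro m _
      have hcont : Continuous fun φ : SchwartzMap E ℝ =>
          SchwartzMap.seminorm ℝ k m (φ - φ₀) := by
        have h1 := (schwartz_withSeminorms ℝ E ℝ).continuous_seminorm (k, m)
        exact h1.comp (continuous_id.sub continuous_const)
      have : Filter.Tendsto (fun φ : SchwartzMap E ℝ =>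
          SchwartzMap.seminorm ℝ k m (φ - φ₀)) (𝓝 φ₀) (𝓝 0) := by
        have := hcont.tendsto φ₀
        simpa using this
      exact this.eventually_lt_const hδ
    filter_upwards [hev1, hev2] with φ h1 h2
    -- derivative bounds on φ and φ₀
    have hbφ : ∀ i ≤ n, ∀ x, ‖iteratedFDeriv ℝ i (⇑φ) x‖ ≤ R := by
      refine bounds_of_seminorm fun i hi => ?_
      have e1 : φ = φ₀ + (φ - φ₀) := by abel
      calc SchwartzMap.seminorm ℝ 0 i φ
          = SchwartzMap.seminorm ℝ 0 i (φ₀ + (φ - φ₀)) := by rw [← e1]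
        _ ≤ SchwartzMap.seminorm ℝ 0 i φ₀ + SchwartzMap.seminorm ℝ 0 i (φ - φ₀) :=
            map_add_le_add _ _ _
        _ ≤ (∑ j ∈ Finset.range (N + 1), SchwartzMap.seminorm ℝ 0 j φ₀) + 1 := by
            refine add_le_add ?_
              (le_of_lt (h1 i (Finset.mem_range.mpr (Nat.lt_succ_of_le (hi.trans hnN)))))
            exact Finset.single_le_sum (fun j _ => apply_nonneg _ _)
              (Finset.mem_range.mpr (Nat.lt_succ_of_le (hi.trans hnN)))
        _ = R := hRdef.symm
    have hbφ₀ : ∀ i ≤ n, ∀ x, ‖iteratedFDeriv ℝ i (⇑φ₀) x‖ ≤ R := by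
      refine bounds_of_seminorm fun i hi => ?_
      refine le_trans (Finset.single_le_sum (f := fun j => SchwartzMap.seminorm ℝ 0 j φ₀)
        (fun j _ => apply_nonneg _ _)
        (Finset.mem_range.mpr (Nat.lt_succ_of_le (hi.trans hnN)))) ?_
      rw [hRdef]
      linarith
    -- the quantitative bound
    have hsem : SchwartzMap.seminorm ℝ k n (Lmap hα φ - Lmap hα φ₀)
        ≤ C * ∑ j ∈ Finset.range (n + 1), SchwartzMap.seminorm ℝ k j (φ - φ₀) := by
      refine SchwartzMap.seminorm_le_bound ℝ k n _ ?_ fun x => ?_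
      · exact mul_nonneg hC0 (Finset.sum_nonneg fun j _ => apply_nonneg _ _)
      · rw [Lmap_sub_coe]
        exact hC φ φ₀ hbφ hbφ₀ n le_rfl k x
    have hsum : (∑ j ∈ Finset.range (n + 1), SchwartzMap.seminorm ℝ k j (φ - φ₀))
        ≤ (n + 1) * δ := by
      calc (∑ j ∈ Finset.range (n + 1), SchwartzMap.seminorm ℝ k j (φ - φ₀))
          ≤ ∑ _j ∈ Finset.range (n + 1), δ :=
            Finset.sum_le_sum fun j hj => le_of_lt (h2 j hj)
        _ = (n + 1) * δ := by
            rw [Finset.sum_const, Finset.card_range, nsmul_eq_mul]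
            push_cast; ring
    have hfinal : C * ((n + 1) * δ) < r := by
      have hne : ((n : ℝ) + 1) * (C + 1) ≠ 0 := by positivity
      have hu : δ * (((n : ℝ) + 1) * (C + 1)) = r := div_mul_cancel₀ r hne
      nlinarith [hδ, mul_pos (by positivity : (0:ℝ) < (n:ℝ) + 1) hδ]
    have : schwartzSeminormFamily ℝ E ℝ (k, n) = SchwartzMap.seminorm ℝ k n := rfl
    rw [this]
    calc SchwartzMap.seminorm ℝ k n (Lmap hα φ - Lmap hα φ₀)
        ≤ C * ∑ j ∈ Finset.range (n + 1), SchwartzMap.seminorm ℝ k j (φ - φ₀) := hsem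
      _ ≤ C * ((n + 1) * δ) := mul_le_mul_of_nonneg_left hsum hC0
      _ < r := hfinal
  have := (Finset.eventually_all s).mpr hmain
  filter_upwards [this] with φ hφ
  rw [Seminorm.mem_ball_zero]
  exact Seminorm.finset_sup_apply_lt hr hφ

end St5
end

/-- the map `L(φ) = e^{φ/α} - 1` sends the Schwartz space to itself,
takes values `> -1` pointwise, and is continuous from `S` to `S`. -/
theorem statement5 (d : ℕ) (hd : 1 ≤ d) (α : ℝ) (hα : 0 < α) :
    ∃ L : SchwartzMap (Euc d) ℝ → SchwartzMap (Euc d) ℝ,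
      (∀ φ x, L φ x = Real.exp (φ x / α) - 1) ∧
      (∀ φ x, -1 < L φ x) ∧
      Continuous L := by
  refine ⟨St5.Lmap hα, fun φ x => rfl, fun φ x => ?_, St5.continuous_Lmap hα⟩
  have h := Real.exp_pos (φ x / α)
  have : St5.Lmap hα φ x = Real.exp (φ x / α) - 1 := rfl
  rw [this]
  linarith
end
end

section
/- Let α > 0 and let φ be a Schwartz function on ℝ^d with φ(x) > -1 for all x ∈ ℝ^d. Then H(φ) := -α ln(1 + φ) is again a Schwartz function; moreover, if φ_n → φ in the Schwartz topology with φ_n(x) > -1 and φ(x) > -1 for all x and n, then H(φ_n) → H(φ) in the Schwartz topology. -/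
open MeasureTheory Real Filter Set

noncomputable section

open scoped ContDiff SchwartzMap

namespace S6

variable {d : ℕ}

lemma schwartz_temperate (f : SchwartzMap (Euc d) ℝ) :
    Function.HasTemperateGrowth (⇑f) := by
  refine ⟨f.smooth', fun n => ⟨0, SchwartzMap.seminorm ℝ 0 n f, fun x => ?_⟩⟩
  simpa using SchwartzMap.le_seminorm ℝ 0 n f x

lemma norm_le_sup_Iic (m : ℕ × ℕ) (f : SchwartzMap (Euc d) ℝ) (x : Euc d) :
    ‖f x‖ ≤ (Finset.Iic m).sup (schwartzSeminormFamily ℝ (Euc d) ℝ) f := by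
  have h := SchwartzMap.le_seminorm ℝ 0 0 f x
  simp only [pow_zero, one_mul, norm_iteratedFDeriv_zero] at h
  refine h.trans ?_
  have hmem : (0, 0) ∈ Finset.Iic m := Finset.mem_Iic.2 (by simp [Prod.le_def])
  exact Seminorm.le_def.1
    (Finset.le_sup (f := schwartzSeminormFamily ℝ (Euc d) ℝ) hmem) f

lemma exists_lb (φ : SchwartzMap (Euc d) ℝ) (h : ∀ x, -1 < φ x) :
    ∃ mb : ℝ, -1 < mb ∧ mb ≤ 0 ∧ ∀ x, mb ≤ φ x := by
  have hz : Tendsto (⇑φ) (cocompact (Euc d)) (nhds 0) := zero_at_infty φ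
  have h2 : φ ⁻¹' (Ioo (-(1/2) : ℝ) (1/2)) ∈ cocompact (Euc d) :=
    hz (Ioo_mem_nhds (by norm_num) (by norm_num))
  rw [mem_cocompact] at h2
  obtain ⟨K, hK, hKs⟩ := h2
  rcases K.eq_empty_or_nonempty with rfl | hne
  · exact ⟨-(1/2), by norm_num, by norm_num,
      fun x => le_of_lt (hKs (by simp : x ∈ (∅ : Set (Euc d))ᶜ)).1⟩
  · obtain ⟨x₀, hx₀, hmin⟩ := hK.exists_isMinOn hne φ.continuous.continuousOn
    refine ⟨min (φ x₀) (-(1/2)), lt_min (h x₀) (by norm_num),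
      min_le_of_right_le (by norm_num), fun x => ?_⟩
    by_cases hx : x ∈ K
    · exact le_trans (min_le_left _ _) (hmin hx)
    · exact le_trans (min_le_right _ _) (le_of_lt (hKs hx).1)

lemma exists_g (mb α : ℝ) (h1 : -1 < mb) (h2 : mb ≤ 0) :
    ∃ g gi : ℝ → ℝ, ContDiff ℝ ∞ g ∧ g 0 = 0 ∧
      (∀ t, mb ≤ t → g t = -α * Real.log (1 + t)) ∧
      ContDiff ℝ ∞ gi ∧ gi 0 = 0 ∧ (∀ t, mb ≤ t → gi t = (1 + t)⁻¹ - 1) := by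
  set c : ℝ := (-1 + mb) / 2 with hc
  have hc1 : -1 < c := by rw [hc]; linarith
  have hc2 : c < mb := by rw [hc]; linarith
  set ρ : ℝ → ℝ := fun t => c + (t - c) * Real.smoothTransition ((t - c) / (mb - c)) with hρ
  have hρc : ContDiff ℝ ∞ ρ := by
    refine contDiff_const.add ((contDiff_id.sub contDiff_const).mul
      (Real.smoothTransition.contDiff.comp ?_))
    exact (contDiff_id.sub contDiff_const).div_const _
  have hρlb : ∀ t, c ≤ ρ t := by
    intro t
    rcases le_or_gt t c with h | h
    · have : (t - c) / (mb - c) ≤ 0 := div_nonpos_of_nonpos_of_nonneg (by linarith) (by linarith)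
      rw [hρ]; simp only
      rw [Real.smoothTransition.zero_of_nonpos this, mul_zero, add_zero]
    · have h0 := Real.smoothTransition.nonneg ((t - c) / (mb - c))
      rw [hρ]; simp only
      nlinarith
  have hρid : ∀ t, mb ≤ t → ρ t = t := by
    intro t ht
    have harg : 1 ≤ (t - c) / (mb - c) := by
      rw [le_div_iff₀ (by linarith)]
      linarith
    rw [hρ]; simp only
    rw [Real.smoothTransition.one_of_one_le harg]; ring
  have hρ0 : ρ 0 = 0 := hρid 0 h2
  have hρpos : ∀ t, (0:ℝ) < 1 + ρ t := fun t => by have := hρlb t; linarith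
  refine ⟨fun t => -α * Real.log (1 + ρ t), fun t => (1 + ρ t)⁻¹ - 1,
    ?_, ?_, ?_, ?_, ?_, ?_⟩
  · exact contDiff_const.mul ((contDiff_const.add hρc).log fun t => (hρpos t).ne')
  · simp [hρ0]
  · intro t ht; show -α * Real.log (1 + ρ t) = _; rw [hρid t ht]
  · exact ((contDiff_const.add hρc).inv fun t => (hρpos t).ne').sub contDiff_const
  · simp [hρ0]
  · intro t ht; show (1 + ρ t)⁻¹ - 1 = _; rw [hρid t ht]


lemma seminorm_le_sup_Iic (k n : ℕ) (M : ℕ × ℕ) (h : (k, n) ≤ M) (f : SchwartzMap (Euc d) ℝ) :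
    SchwartzMap.seminorm ℝ k n f ≤
      (Finset.Iic M).sup (schwartzSeminormFamily ℝ (Euc d) ℝ) f := by
  rw [← SchwartzMap.schwartzSeminormFamily_apply]
  exact Seminorm.le_def.1
    (Finset.le_sup (f := schwartzSeminormFamily ℝ (Euc d) ℝ) (Finset.mem_Iic.2 h)) f

set_option maxHeartbeats 1000000 in
lemma core (g : ℝ → ℝ) (hg : ContDiff ℝ ∞ g) (hg0 : g 0 = 0) (k m : ℕ) (R : ℝ) (hR : 1 ≤ R) :
    ∃ C : ℝ, 0 < C ∧ ∀ (w : SchwartzMap (Euc d) ℝ) (F : Euc d → ℝ),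
      (∀ x, F x = g (w x)) →
      (Finset.Iic (k * m + k, m)).sup (schwartzSeminormFamily ℝ (Euc d) ℝ) w ≤ R →
      ∀ x, ‖x‖ ^ k * ‖iteratedFDeriv ℝ m F x‖ ≤
        C * (Finset.Iic (k * m + k, m)).sup (schwartzSeminormFamily ℝ (Euc d) ℝ) w := by
  have hinf : ∀ n : ℕ, (n : WithTop ℕ∞) ≤ ∞ := fun n => by exact_mod_cast le_top
  have hone : (1 : WithTop ℕ∞) ≤ ∞ := by exact_mod_cast le_top
  rcases Nat.eq_zero_or_pos m with rfl | hm
  · -- m = 0 : Lipschitz estimate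
    obtain ⟨K, hK⟩ := (isCompact_closedBall (0:ℝ) R).exists_bound_of_continuousOn
      (hg.continuous_fderiv (by simp)).continuousOn
    refine ⟨max 1 K, lt_of_lt_of_le one_pos (le_max_left _ _), fun w F hF hsup x => ?_⟩
    have hwmem : ∀ y : Euc d, (w y : ℝ) ∈ Metric.closedBall (0:ℝ) R := fun y =>
      mem_closedBall_zero_iff.2 ((norm_le_sup_Iic _ w y).trans hsup)
    have h0mem : (0:ℝ) ∈ Metric.closedBall (0:ℝ) R :=
      mem_closedBall_zero_iff.2 (by simpa using (by linarith : (0:ℝ) ≤ R))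
    have hlip : ‖g (w x) - g 0‖ ≤ max 1 K * ‖(w x : ℝ) - 0‖ :=
      Convex.norm_image_sub_le_of_norm_fderiv_le
        (fun y _ => (hg.differentiable (by simp)).differentiableAt)
        (fun y hy => (hK y hy).trans (le_max_right _ _)) (convex_closedBall _ _) h0mem (hwmem x)
    rw [norm_iteratedFDeriv_zero, hF x]
    have hlip' : ‖g (w x)‖ ≤ max 1 K * ‖(w x : ℝ)‖ := by simpa [hg0] using hlip
    have h2 : ‖x‖ ^ k * ‖(w x : ℝ)‖ ≤
        (Finset.Iic (k * 0 + k, 0)).sup (schwartzSeminormFamily ℝ (Euc d) ℝ) w := by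
      have h3 := SchwartzMap.le_seminorm ℝ k 0 w x
      rw [norm_iteratedFDeriv_zero] at h3
      exact h3.trans (seminorm_le_sup_Iic k 0 _ (by simp [Prod.le_def]) w)
    calc ‖x‖ ^ k * ‖g (w x)‖ ≤ ‖x‖ ^ k * (max 1 K * ‖(w x : ℝ)‖) := by
          exact mul_le_mul_of_nonneg_left hlip' (by positivity)
      _ = max 1 K * (‖x‖ ^ k * ‖(w x : ℝ)‖) := by ring
      _ ≤ max 1 K * ((Finset.Iic (k * 0 + k, 0)).sup (schwartzSeminormFamily ℝ (Euc d) ℝ) w) :=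
          mul_le_mul_of_nonneg_left h2 (le_trans one_pos.le (le_max_left _ _))
  · -- m ≥ 1
    have hbd : ∀ i : ℕ, ∃ Ci : ℝ, ∀ y ∈ Metric.closedBall (0:ℝ) R,
        ‖iteratedFDeriv ℝ i g y‖ ≤ Ci := fun i =>
      (isCompact_closedBall (0:ℝ) R).exists_bound_of_continuousOn
        (hg.continuous_iteratedFDeriv (hinf i)).continuousOn
    choose Cb hCb using hbd
    set C₀ : ℝ := max 1 (∑ i ∈ Finset.range (m + 1), max 0 (Cb i)) with hC₀
    have hC₀1 : (1:ℝ) ≤ C₀ := le_max_left _ _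
    have hC₀b : ∀ i, i ≤ m → ∀ y ∈ Metric.closedBall (0:ℝ) R,
        ‖iteratedFDeriv ℝ i g y‖ ≤ C₀ := by
      intro i hi y hy
      refine (hCb i y hy).trans (le_trans (le_max_right 0 (Cb i))
        (le_trans ?_ (le_max_right _ _)))
      exact Finset.single_le_sum (f := fun j => max 0 (Cb j))
        (fun j _ => le_max_left 0 (Cb j)) (Finset.mem_range.2 (Nat.lt_succ_of_le hi))
    set B : ℝ := 2 ^ (k * m + k) * R with hB
    have h2pow : (1:ℝ) ≤ 2 ^ (k * m + k) := one_le_pow₀ (by norm_num)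
    have hB1 : (1:ℝ) ≤ B := by rw [hB]; nlinarith
    refine ⟨(m.factorial : ℝ) * C₀ * B ^ m, by positivity, fun w F hF hsup x => ?_⟩
    set T : ℝ := (Finset.Iic (k * m + k, m)).sup (schwartzSeminormFamily ℝ (Euc d) ℝ) w with hT
    have hT0 : (0:ℝ) ≤ T := apply_nonneg _ _
    rcases eq_or_lt_of_le hT0 with hTz | hTp
    · -- T = 0 : w ≡ 0 and F ≡ 0
      have hw0 : ∀ y, (w y : ℝ) = 0 := by
        intro y
        have h4 := norm_le_sup_Iic (k * m + k, m) w y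
        rw [← hT, ← hTz] at h4
        exact norm_le_zero_iff.1 h4
      have hF0 : F = fun _ => (0:ℝ) := funext fun y => by rw [hF y, hw0 y, hg0]
      rw [hF0, iteratedFDeriv_zero_fun]
      simp [← hTz]
    · -- main case
      have hm0 : ((m:ℝ)) ≠ 0 := by
        have : (0:ℝ) < (m:ℝ) := by exact_mod_cast hm
        exact this.ne'
      set s : ℝ := T ^ ((m:ℝ)⁻¹) with hsdef
      have hs0 : 0 < s := Real.rpow_pos_of_pos hTp _
      set P : ℝ := 1 + ‖x‖ with hP
      have hP1 : (1:ℝ) ≤ P := by rw [hP]; have := norm_nonneg x; linarith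
      have hP0 : (0:ℝ) < P := lt_of_lt_of_le one_pos hP1
      have hTR : T ≤ R := hsup
      have hsm : s ^ m = T := by
        rw [hsdef, ← Real.rpow_natCast (T ^ ((m:ℝ)⁻¹)) m, ← Real.rpow_mul hT0,
          inv_mul_cancel₀ hm0, Real.rpow_one]
      have hkey : ∀ i : ℕ, 1 ≤ i → i ≤ m → 2 ^ (k * m + k) * T ≤ (B * s) ^ i := by
        intro i h1i him
        have hsi : s ^ i = T ^ ((m:ℝ)⁻¹ * (i:ℝ)) := by
          rw [hsdef, ← Real.rpow_natCast (T ^ ((m:ℝ)⁻¹)) i, ← Real.rpow_mul hT0]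
        have h01 : (0:ℝ) ≤ (m:ℝ)⁻¹ * (i:ℝ) := by positivity
        have h02 : (m:ℝ)⁻¹ * (i:ℝ) ≤ 1 := by
          rw [inv_mul_le_iff₀ (by exact_mod_cast hm : (0:ℝ) < (m:ℝ)), mul_one]
          exact_mod_cast him
        have hTi : T ≤ T ^ ((m:ℝ)⁻¹ * (i:ℝ)) * R := by
          have step : T ^ (1 - (m:ℝ)⁻¹ * (i:ℝ)) ≤ R := by
            calc T ^ (1 - (m:ℝ)⁻¹ * (i:ℝ)) ≤ R ^ (1 - (m:ℝ)⁻¹ * (i:ℝ)) :=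
                  Real.rpow_le_rpow hT0 hTR (by linarith)
              _ ≤ R ^ (1:ℝ) := Real.rpow_le_rpow_of_exponent_le hR (by linarith)
              _ = R := Real.rpow_one R
          calc T = T ^ (1:ℝ) := (Real.rpow_one T).symm
            _ = T ^ ((m:ℝ)⁻¹ * (i:ℝ)) * T ^ (1 - (m:ℝ)⁻¹ * (i:ℝ)) := by
                rw [← Real.rpow_add hTp]; ring_nf
            _ ≤ T ^ ((m:ℝ)⁻¹ * (i:ℝ)) * R :=
                mul_le_mul_of_nonneg_left step (Real.rpow_nonneg hT0 _)
        calc 2 ^ (k * m + k) * T ≤ 2 ^ (k * m + k) * (T ^ ((m:ℝ)⁻¹ * (i:ℝ)) * R) :=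
              mul_le_mul_of_nonneg_left hTi (by positivity)
          _ = B * s ^ i := by rw [hsi, hB]; ring
          _ ≤ (B * s) ^ i := by
              rw [mul_pow]
              exact mul_le_mul_of_nonneg_right (le_self_pow₀ hB1 (by omega))
                (pow_nonneg hs0.le i)
      have hC : ∀ i, i ≤ m → ‖iteratedFDeriv ℝ i g ((w x : ℝ))‖ ≤ C₀ := fun i hi =>
        hC₀b i hi (w x) (mem_closedBall_zero_iff.2 ((norm_le_sup_Iic _ w x).trans hsup))
      have hD : ∀ i, 1 ≤ i → i ≤ m →
          ‖iteratedFDeriv ℝ i (⇑w) x‖ ≤ (B * s / P ^ k) ^ i := by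
        intro i h1i him
        have h1 : P ^ (k * m) * ‖iteratedFDeriv ℝ i (⇑w) x‖ ≤ 2 ^ (k * m + k) * T :=
          SchwartzMap.one_add_le_sup_seminorm_apply (𝕜 := ℝ) (m := (k * m + k, m))
            (k := k * m) (n := i) (Nat.le_add_right _ _) him w x
        rw [div_pow, le_div_iff₀ (by positivity : (0:ℝ) < (P ^ k) ^ i)]
        calc ‖iteratedFDeriv ℝ i (⇑w) x‖ * (P ^ k) ^ i
            ≤ ‖iteratedFDeriv ℝ i (⇑w) x‖ * P ^ (k * m) := by
              rw [← pow_mul]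
              exact mul_le_mul_of_nonneg_left
                (pow_le_pow_right₀ hP1 (Nat.mul_le_mul_left k him)) (norm_nonneg _)
          _ ≤ 2 ^ (k * m + k) * T := by rw [mul_comm]; exact h1
          _ ≤ (B * s) ^ i := hkey i h1i him
      have hcomp := norm_iteratedFDeriv_comp_le hg w.smooth' (hinf m) x hC hD
      have hFg : F = g ∘ ⇑w := funext hF
      rw [hFg]
      calc ‖x‖ ^ k * ‖iteratedFDeriv ℝ m (g ∘ ⇑w) x‖
          ≤ P ^ k * ((m.factorial : ℝ) * C₀ * (B * s / P ^ k) ^ m) := by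
            refine mul_le_mul ?_ hcomp (norm_nonneg _) (by positivity)
            exact pow_le_pow_left₀ (norm_nonneg x) (by rw [hP]; linarith) k
        _ = ((m.factorial : ℝ) * C₀ * B ^ m * T) * (P ^ k / P ^ (k * m)) := by
            rw [div_pow, mul_pow, hsm, ← pow_mul]; ring
        _ ≤ ((m.factorial : ℝ) * C₀ * B ^ m * T) * 1 := by
            refine mul_le_mul_of_nonneg_left ?_ (by positivity)
            rw [div_le_one (by positivity)]
            exact pow_le_pow_right₀ hP1 (Nat.le_mul_of_pos_right k hm)
        _ = (m.factorial : ℝ) * C₀ * B ^ m * T := mul_one _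


lemma compSchwartz (g : ℝ → ℝ) (hg : ContDiff ℝ ∞ g) (hg0 : g 0 = 0)
    (f : SchwartzMap (Euc d) ℝ) : ∃ Φ : SchwartzMap (Euc d) ℝ, ∀ x, (Φ x : ℝ) = g (f x) := by
  have hdecay : ∀ k m : ℕ, ∃ C : ℝ,
      ∀ x, ‖x‖ ^ k * ‖iteratedFDeriv ℝ m (fun y => g (f y)) x‖ ≤ C := by
    intro k m
    have hTf0 : 0 ≤ (Finset.Iic (k * m + k, m)).sup (schwartzSeminormFamily ℝ (Euc d) ℝ) f :=
      apply_nonneg _ _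
    obtain ⟨C, hC0, hC⟩ := core (d := d) g hg hg0 k m
      ((Finset.Iic (k * m + k, m)).sup (schwartzSeminormFamily ℝ (Euc d) ℝ) f + 1)
      (by linarith)
    exact ⟨C * ((Finset.Iic (k * m + k, m)).sup (schwartzSeminormFamily ℝ (Euc d) ℝ) f),
      fun x => hC f (fun y => g (f y)) (fun y => rfl) (by linarith) x⟩
  exact ⟨⟨fun y => g (f y), hg.comp f.smooth', hdecay⟩, fun x => rfl⟩


end S6

/-- if `φ` is Schwartz with `φ > -1` pointwise, then `H(φ) = -α ln(1+φ)` is again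
Schwartz; moreover `H` is sequentially continuous on this set in the Schwartz topology. -/
theorem statement6 (d : ℕ) (hd : 1 ≤ d) (α : ℝ) (hα : 0 < α) :
    (∀ φ : SchwartzMap (Euc d) ℝ, (∀ x, -1 < φ x) →
      ∃ ψ : SchwartzMap (Euc d) ℝ, ∀ x, ψ x = -α * Real.log (1 + φ x)) ∧
    (∀ (φ : SchwartzMap (Euc d) ℝ) (φn : ℕ → SchwartzMap (Euc d) ℝ),
      (∀ x, -1 < φ x) → (∀ n x, -1 < φn n x) →
      ∀ (ψ : SchwartzMap (Euc d) ℝ) (ψn : ℕ → SchwartzMap (Euc d) ℝ),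
      (∀ x, ψ x = -α * Real.log (1 + φ x)) →
      (∀ n x, ψn n x = -α * Real.log (1 + φn n x)) →
      Tendsto φn atTop (nhds φ) →
      Tendsto ψn atTop (nhds ψ)) := by
  constructor
  · intro φ hφ
    obtain ⟨mb, hm1, hm2, hm3⟩ := S6.exists_lb φ hφ
    obtain ⟨g, gi, hgc, hg0, hgeq, _, _, _⟩ := S6.exists_g mb α hm1 hm2
    obtain ⟨ψ, hψ⟩ := S6.compSchwartz g hgc hg0 φ
    exact ⟨ψ, fun x => by rw [hψ x, hgeq _ (hm3 x)]⟩
  · intro φ φn hφ hφn ψ ψn hψ hψn hconv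
    obtain ⟨mb, hm1, hm2, hm3⟩ := S6.exists_lb φ hφ
    set δ : ℝ := 1 + mb with hδ
    have hδ0 : 0 < δ := by rw [hδ]; linarith
    have hφpos : ∀ x, δ ≤ 1 + φ x := fun x => by have := hm3 x; rw [hδ]; linarith
    obtain ⟨g, gi, _, _, _, hgic, hgi0, hgieq⟩ := S6.exists_g mb α hm1 hm2
    obtain ⟨u, hu⟩ := S6.compSchwartz gi hgic hgi0 φ
    obtain ⟨g₂, gi₂, hg₂c, hg₂0, hg₂eq, _, _, _⟩ :=
      S6.exists_g (-(1/2)) α (by norm_num) (by norm_num)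
    set B2 := SchwartzMap.bilinLeftCLM (ContinuousLinearMap.mul ℝ ℝ)
      (S6.schwartz_temperate u) with hB2
    set w : ℕ → SchwartzMap (Euc d) ℝ := fun n => (φn n - φ) + B2 (φn n - φ) with hw
    have hB2app : ∀ (h : SchwartzMap (Euc d) ℝ) x, (B2 h) x = h x * u x := fun h x => rfl
    have hwx : ∀ n x, (w n x : ℝ) = (φn n x - φ x) * (1 + φ x)⁻¹ := by
      intro n x
      have hpφ : (0:ℝ) < 1 + φ x := lt_of_lt_of_le hδ0 (hφpos x)
      have hux : (u x : ℝ) = (1 + φ x)⁻¹ - 1 := by rw [hu x, hgieq _ (hm3 x)]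
      simp only [hw, SchwartzMap.add_apply, SchwartzMap.sub_apply, hB2app, hux]
      ring
    have h1t : Tendsto (fun n => φn n - φ) atTop (nhds 0) :=
      tendsto_sub_nhds_zero_iff.2 hconv
    have hw0 : Tendsto w atTop (nhds 0) := by
      rw [hw]
      have h2t : Tendsto (fun n => B2 (φn n - φ)) atTop (nhds 0) := by
        have h3t := (B2.continuous.tendsto 0).comp h1t
        rw [map_zero] at h3t
        exact h3t
      simpa using h1t.add h2t
    have hwsem := ((schwartz_withSeminorms ℝ (Euc d) ℝ).tendsto_nhds' w 0).1 hw0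
    have hφsem := ((schwartz_withSeminorms ℝ (Euc d) ℝ).tendsto_nhds φn φ).1 hconv
    rw [(schwartz_withSeminorms ℝ (Euc d) ℝ).tendsto_nhds ψn ψ]
    rintro ⟨k, m⟩ ε hε
    obtain ⟨C, hC0, hC⟩ := S6.core (d := d) g₂ hg₂c hg₂0 k m 1 le_rfl
    have hε₁0 : 0 < min 1 (ε / (2 * C)) := lt_min one_pos (by positivity)
    have E1 := hwsem (Finset.Iic (k * m + k, m)) (min 1 (ε / (2 * C))) hε₁0
    have E2 := hφsem (0, 0) (δ / 2) (by positivity)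
    filter_upwards [E1, E2] with n h1 h2
    rw [sub_zero] at h1
    rw [SchwartzMap.schwartzSeminormFamily_apply] at h2
    have hd2 : ∀ x, ‖(φn n - φ) x‖ ≤ δ / 2 := by
      intro x
      have h5 := SchwartzMap.le_seminorm ℝ 0 0 (φn n - φ) x
      simp only [pow_zero, one_mul, norm_iteratedFDeriv_zero] at h5
      exact h5.trans h2.le
    have hptw : ∀ x, ((ψn n - ψ) x : ℝ) = g₂ (w n x) := by
      intro x
      have hpφ : (0:ℝ) < 1 + φ x := lt_of_lt_of_le hδ0 (hφpos x)
      have hpφn : (0:ℝ) < 1 + φn n x := by have := hφn n x; linarith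
      have hwn : (w n x : ℝ) = (φn n x - φ x) * (1 + φ x)⁻¹ := hwx n x
      have h5 : |φn n x - φ x| ≤ δ / 2 := by
        have := hd2 x
        rwa [SchwartzMap.sub_apply, Real.norm_eq_abs] at this
      have habs : |(w n x : ℝ)| ≤ 1 / 2 := by
        rw [hwn, abs_mul, abs_of_pos (inv_pos.2 hpφ)]
        have h6 : (1 + φ x)⁻¹ ≤ δ⁻¹ := inv_anti₀ hδ0 (hφpos x)
        calc |φn n x - φ x| * (1 + φ x)⁻¹ ≤ (δ / 2) * δ⁻¹ :=
              mul_le_mul h5 h6 (by positivity) (by positivity)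
          _ = 1 / 2 := by field_simp
      have hge : -(1 / 2) ≤ (w n x : ℝ) := by
        have := (abs_le.1 habs).1; linarith
      have h1w : 1 + (w n x : ℝ) = (1 + φn n x) * (1 + φ x)⁻¹ := by
        rw [hwn]; field_simp; ring
      rw [SchwartzMap.sub_apply, hψn n x, hψ x, hg₂eq _ hge, h1w,
        Real.log_mul hpφn.ne' (inv_ne_zero hpφ.ne'), Real.log_inv]
      ring
    have hsup1 : (Finset.Iic (k * m + k, m)).sup (schwartzSeminormFamily ℝ (Euc d) ℝ) (w n)
        ≤ 1 := le_trans h1.le (min_le_left _ _)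
    have hb := hC (w n) (⇑(ψn n - ψ)) hptw hsup1
    have hsemle : SchwartzMap.seminorm ℝ k m (ψn n - ψ) ≤
        C * (Finset.Iic (k * m + k, m)).sup (schwartzSeminormFamily ℝ (Euc d) ℝ) (w n) :=
      SchwartzMap.seminorm_le_bound ℝ k m _ (by positivity) hb
    rw [SchwartzMap.schwartzSeminormFamily_apply]
    calc SchwartzMap.seminorm ℝ k m (ψn n - ψ)
        ≤ C * (Finset.Iic (k * m + k, m)).sup (schwartzSeminormFamily ℝ (Euc d) ℝ) (w n) :=
          hsemle
      _ ≤ C * (ε / (2 * C)) := by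
          refine mul_le_mul_of_nonneg_left (le_trans h1.le (min_le_right _ _)) hC0.le
      _ = ε / 2 := by field_simp
      _ < ε := by linarith
end
end

section
/- Let φ be a smooth compactly supported function on ℝ^d, let T > 0, and let β be a multi-index. Then there exists a constant C > 0 such that |D^β (P_t φ)(x)| ≤ C e^{-|x|} for all t ∈ [0,T] and all x ∈ ℝ^d. -/
open MeasureTheory Real Filter Set
open scoped Convolution

noncomputable section

/-- The Gaussian kernel. -/
def gk (d : ℕ) (α t : ℝ) (z : Euc d) : ℝ :=
  (2 * π * α * t) ^ (-(d : ℝ) / 2) * Real.exp (-‖z‖ ^ 2 / (2 * α * t))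

lemma gk_cont (d : ℕ) (α t : ℝ) : Continuous (gk d α t) := by
  unfold gk; fun_prop

lemma two_pi_alpha_t_pos {α t : ℝ} (hα : 0 < α) (ht : 0 < t) : 0 < 2 * π * α * t :=
  mul_pos (mul_pos (mul_pos two_pos Real.pi_pos) hα) ht

lemma gk_nonneg {d : ℕ} {α t : ℝ} (hα : 0 < α) (ht : 0 < t) (z : Euc d) :
    0 ≤ gk d α t z :=
  le_of_lt (mul_pos (Real.rpow_pos_of_pos (two_pi_alpha_t_pos hα ht) _) (Real.exp_pos _))

lemma gk_eq {d : ℕ} {α t : ℝ} (hα : 0 < α) (ht : 0 < t) (z : Euc d) :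
    gk d α t z = (2 * π * α * t) ^ (-(d : ℝ) / 2) * Real.exp (-(2*α*t)⁻¹ * ‖z‖ ^ 2) := by
  have h : 0 < 2 * α * t := by positivity
  rw [gk]
  congr 1
  rw [neg_div, div_eq_inv_mul, neg_mul]

lemma integrable_rexp_neg_mul_sq_norm {V : Type*} [NormedAddCommGroup V]
    [InnerProductSpace ℝ V] [FiniteDimensional ℝ V] [MeasurableSpace V] [BorelSpace V]
    {b : ℝ} (hb : 0 < b) : Integrable fun v : V => Real.exp (-b * ‖v‖ ^ 2) := by
  have h := (GaussianFourier.integrable_cexp_neg_mul_sq_norm_add (b := (b : ℂ))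
    (by simpa using hb) 0 (0 : V)).norm
  simp only [Complex.norm_exp] at h
  refine h.congr ?_
  filter_upwards with v
  norm_num
  left
  norm_cast

lemma gk_integrable {d : ℕ} {α t : ℝ} (hα : 0 < α) (ht : 0 < t) :
    Integrable (gk d α t) := by
  have hb : 0 < (2*α*t)⁻¹ := by positivity
  have h := (integrable_rexp_neg_mul_sq_norm (V := Euc d) hb).const_mul
    ((2 * π * α * t) ^ (-(d : ℝ) / 2))
  refine h.congr ?_
  filter_upwards with z
  rw [gk_eq hα ht]

lemma gk_integral {d : ℕ} {α t : ℝ} (hα : 0 < α) (ht : 0 < t) :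
    ∫ z : Euc d, gk d α t z = 1 := by
  have hb : 0 < (2*α*t)⁻¹ := by positivity
  have h2 : 0 < 2 * π * α * t := two_pi_alpha_t_pos hα ht
  calc ∫ z : Euc d, gk d α t z
      = (2 * π * α * t) ^ (-(d : ℝ) / 2) * ∫ z : Euc d, Real.exp (-(2*α*t)⁻¹ * ‖z‖ ^ 2) := by
        rw [← integral_const_mul]
        congr 1; funext z; rw [gk_eq hα ht]
    _ = (2 * π * α * t) ^ (-(d : ℝ) / 2) * (π / (2*α*t)⁻¹) ^ ((d : ℝ) / 2) := by
        rw [GaussianFourier.integral_rexp_neg_mul_sq_norm hb]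
        congr 2
        simp [finrank_euclideanSpace_fin]
    _ = 1 := by
        have : π / (2*α*t)⁻¹ = 2 * π * α * t := by field_simp
        rw [this, ← Real.rpow_add h2]
        have : -(d:ℝ)/2 + (d:ℝ)/2 = 0 := by ring
        rw [this, Real.rpow_zero]

lemma heatP_eq_conv {d : ℕ} {α t : ℝ} (ht : t ≠ 0) (ψ : Euc d → ℝ) :
    heatP d α t ψ = ψ ⋆[ContinuousLinearMap.mul ℝ ℝ] gk d α t := by
  funext x
  rw [heatP, if_neg ht]
  simp only [convolution_def, ContinuousLinearMap.mul_apply', gk]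
  congr 1; funext y; ring

lemma pderivI_contDiff {d : ℕ} (i : Fin d) {ψ : Euc d → ℝ} (hψ : ContDiff ℝ (⊤:ℕ∞) ψ) :
    ContDiff ℝ (⊤:ℕ∞) (pderivI i ψ) :=
  (hψ.fderiv_right (m := (⊤:ℕ∞)) (by exact_mod_cast le_rfl)).clm_apply contDiff_const

lemma pderivI_hasCompactSupport {d : ℕ} (i : Fin d) {ψ : Euc d → ℝ}
    (hc : HasCompactSupport ψ) : HasCompactSupport (pderivI i ψ) :=
  hc.fderiv_apply ℝ (EuclideanSpace.single i 1)

lemma pderivI_heatP {d : ℕ} {α t : ℝ} (hα : 0 < α) (ht : 0 < t) (i : Fin d)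
    {ψ : Euc d → ℝ} (hψ : ContDiff ℝ (⊤:ℕ∞) ψ) (hc : HasCompactSupport ψ) :
    pderivI i (heatP d α t ψ) = heatP d α t (pderivI i ψ) := by
  funext x
  set L := ContinuousLinearMap.mul ℝ ℝ with hL
  set v := EuclideanSpace.single i (1:ℝ) with hv
  have hK : LocallyIntegrable (gk d α t) := (gk_cont d α t).locallyIntegrable
  have hder := hc.hasFDerivAt_convolution_left L (hψ.of_le (by simp)) hK x
  have hcont : Continuous fun y => (L.precompL (Euc d)) (fderiv ℝ ψ y) (gk d α t (x - y)) := by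
    refine Continuous.clm_apply ?_ ?_
    · exact (L.precompL (Euc d)).continuous.comp (hψ.continuous_fderiv (by simp))
    · exact (gk_cont d α t).comp (continuous_const.sub continuous_id)
  have hsupp : HasCompactSupport
      fun y => (L.precompL (Euc d)) (fderiv ℝ ψ y) (gk d α t (x - y)) := by
    refine (hc.fderiv ℝ).mono' ?_
    intro y hy
    by_contra hy'
    have : fderiv ℝ ψ y = 0 := image_eq_zero_of_notMem_tsupport hy'
    simp [this] at hy
  have hint : Integrable fun y => (L.precompL (Euc d)) (fderiv ℝ ψ y) (gk d α t (x - y)) :=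
    hcont.integrable_of_hasCompactSupport hsupp
  calc pderivI i (heatP d α t ψ) x
      = fderiv ℝ (ψ ⋆[L] gk d α t) x v := by rw [pderivI, heatP_eq_conv ht.ne']
    _ = ((fderiv ℝ ψ ⋆[L.precompL (Euc d)] gk d α t) x) v := by rw [hder.fderiv]
    _ = ∫ y, fderiv ℝ ψ y v * gk d α t (x - y) := by
        rw [convolution_def, ContinuousLinearMap.integral_apply hint]
        congr 1
    _ = heatP d α t (pderivI i ψ) x := by
        rw [heatP_eq_conv ht.ne', convolution_def]
        rfl

lemma heatP_apply {d : ℕ} {α t : ℝ} (ht : t ≠ 0) (ψ : Euc d → ℝ) (x : Euc d) :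
    heatP d α t ψ x = ∫ y : Euc d, gk d α t (x - y) * ψ y := by
  rw [heatP, if_neg ht]; rfl

lemma heatP_zero {d : ℕ} {α : ℝ} (ψ : Euc d → ℝ) : heatP d α 0 ψ = ψ :=
  funext fun _ => if_pos rfl

/-- The key arithmetic facts in the far-field regime. -/
lemma arith_facts {α T R x' : ℝ} (hα : 0 < α) (hT : 0 < T) (hR : 1 ≤ R)
    (hx : 2*R + 16*α*T + 2*α + 2 ≤ x') :
    0 < x' - R ∧ 1 ≤ (x'-R)^2/(2*α) ∧ x' ≤ (x'-R)^2/(2*α)/(2*T) := by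
  have hR0 : 0 < R := lt_of_lt_of_le one_pos hR
  have h16 : 0 ≤ 16*α*T := by positivity
  have hs1 : 1 ≤ x' - R := by nlinarith
  have hs2α : 2*α ≤ x' - R := by nlinarith
  have hs2 : x'/2 ≤ x' - R := by nlinarith
  have hxT : 16*α*T ≤ x' := by nlinarith
  have hx0 : 0 < x' := by nlinarith
  refine ⟨by linarith, ?_, ?_⟩
  · rw [le_div_iff₀ (by positivity)]
    nlinarith
  · rw [div_div, le_div_iff₀ (by positivity)]
    nlinarith [mul_le_mul hs2 hs2 (by positivity) (by linarith)]

lemma heatP_abs_le {d : ℕ} {α t : ℝ} (hα : 0 < α) (ht : 0 < t) {ψ : Euc d → ℝ}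
    (hcont : Continuous ψ) (hc : HasCompactSupport ψ) {M : ℝ}
    (hM : ∀ y, |ψ y| ≤ M) (x : Euc d) : |heatP d α t ψ x| ≤ M := by
  rw [heatP_apply ht.ne' ψ x]
  have hgi : Integrable (fun y => gk d α t (x - y)) :=
    (integrable_comp_sub_left (gk d α t) x).mpr (gk_integrable hα ht)
  have hFc : Continuous fun y => gk d α t (x - y) * ψ y :=
    ((gk_cont d α t).comp (continuous_const.sub continuous_id)).mul hcont
  have hFs : HasCompactSupport fun y => gk d α t (x - y) * ψ y := by
    refine hc.mono' ?_
    intro y hy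
    by_contra hy'
    have : ψ y = 0 := image_eq_zero_of_notMem_tsupport hy'
    simp [this] at hy
  have hFint : Integrable fun y => gk d α t (x - y) * ψ y :=
    hFc.integrable_of_hasCompactSupport hFs
  calc |∫ y, gk d α t (x - y) * ψ y|
      ≤ ∫ y, |gk d α t (x - y) * ψ y| := by
        have h := norm_integral_le_integral_norm (μ := volume)
          (fun y => gk d α t (x - y) * ψ y)
        simpa only [Real.norm_eq_abs] using h
    _ ≤ ∫ y, gk d α t (x - y) * M := by
        refine integral_mono hFint.abs (hgi.mul_const M) ?_
        intro y
        dsimp only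
        rw [abs_mul, abs_of_nonneg (gk_nonneg hα ht _)]
        exact mul_le_mul_of_nonneg_left (hM y) (gk_nonneg hα ht _)
    _ = (∫ y, gk d α t (x - y)) * M := integral_mul_const M _
    _ = M := by
        rw [integral_sub_left_eq_self (gk d α t) volume x, gk_integral hα ht, one_mul]

lemma heatP_far {d : ℕ} {α t R : ℝ} (hα : 0 < α) (ht : 0 < t) {ψ : Euc d → ℝ}
    (hcont : Continuous ψ) (hRsupp : tsupport ψ ⊆ Metric.closedBall 0 R)
    {M : ℝ} (hM : ∀ y, |ψ y| ≤ M) (hM0 : 0 ≤ M)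
    {x : Euc d} {s : ℝ} (hs0 : 0 ≤ s)
    (hs : ∀ y ∈ Metric.closedBall (0:Euc d) R, s ≤ ‖x - y‖) :
    |heatP d α t ψ x| ≤ M * ((2*π*α*t)^(-(d:ℝ)/2) * Real.exp (-(s^2/(2*α)/t)))
      * (volume (Metric.closedBall (0:Euc d) R)).toReal := by
  have h2παt := two_pi_alpha_t_pos hα ht
  have hpre : (0:ℝ) < (2*π*α*t)^(-(d:ℝ)/2) := Real.rpow_pos_of_pos h2παt _
  set gkm : ℝ := (2*π*α*t)^(-(d:ℝ)/2) * Real.exp (-(s^2/(2*α)/t)) with hgkmdef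
  have hgkm0 : 0 ≤ gkm := le_of_lt (mul_pos hpre (Real.exp_pos _))
  have hpt : ∀ y ∈ Metric.closedBall (0:Euc d) R,
      ‖gk d α t (x - y) * ψ y‖ ≤ M * gkm := by
    intro y hy
    have hxy : s ≤ ‖x - y‖ := hs y hy
    have hexp : Real.exp (-‖x - y‖^2/(2*α*t)) ≤ Real.exp (-(s^2/(2*α)/t)) := by
      apply Real.exp_le_exp.mpr
      have h1 : s^2 ≤ ‖x - y‖^2 := by nlinarith [norm_nonneg (x - y)]
      have h2 : s^2/(2*α)/t = s^2/(2*α*t) := by rw [div_div]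
      have h3 : 0 < 2*α*t := by positivity
      rw [h2, neg_div, neg_le_neg_iff]
      exact div_le_div_of_nonneg_right h1 h3.le
    rw [norm_mul, Real.norm_eq_abs, Real.norm_eq_abs, abs_of_nonneg (gk_nonneg hα ht _)]
    calc gk d α t (x - y) * |ψ y|
        ≤ gkm * M := by
          apply mul_le_mul _ (hM y) (abs_nonneg _) hgkm0
          rw [gk, hgkmdef]
          exact mul_le_mul_of_nonneg_left hexp hpre.le
      _ = M * gkm := mul_comm _ _
  have hshrink : ∫ y, gk d α t (x - y) * ψ y
      = ∫ y in Metric.closedBall (0:Euc d) R, gk d α t (x - y) * ψ y := by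
    refine (setIntegral_eq_integral_of_forall_compl_eq_zero ?_).symm
    intro y hy
    have : ψ y = 0 := by
      apply image_eq_zero_of_notMem_tsupport
      exact fun hmem => hy (hRsupp hmem)
    simp [this]
  have hFc : Continuous fun y => gk d α t (x - y) * ψ y :=
    ((gk_cont d α t).comp (continuous_const.sub continuous_id)).mul hcont
  rw [heatP_apply ht.ne' ψ x, hshrink]
  exact norm_setIntegral_le_of_norm_le_const
    measure_closedBall_lt_top hpt

/-- Far-field bound on the Gaussian prefactor, uniformly in `t ∈ (0,T]`. -/
lemma gkm_bound {d : ℕ} {α T t a x' : ℝ} (hα : 0 < α) (hT : 0 < T) (ht : 0 < t)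
    (htT : t ≤ T) (ha1 : 1 ≤ a) (hax : x' ≤ a/(2*T)) :
    (2*π*α*t)^(-(d:ℝ)/2) * Real.exp (-(a/t)) ≤
      (2*π*α)^(-(d:ℝ)/2) * (d.factorial : ℝ) * 2^d * T^((d:ℝ)/2) * Real.exp (-x') := by
  have h2πα : (0:ℝ) < 2*π*α := by positivity
  have ha0 : 0 < a := lt_of_lt_of_le one_pos ha1
  have hfact : (0:ℝ) < (d.factorial : ℝ) := by exact_mod_cast d.factorial_pos
  have hbd1 : Real.exp (-(a/(2*t))) ≤ (d.factorial : ℝ) * (2*t)^d / a^d := by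
    have key := Real.pow_div_factorial_le_exp (x := a/(2*t)) (by positivity) d
    have h2 : Real.exp (-(a/(2*t))) ≤ ((a/(2*t))^d / (d.factorial:ℝ))⁻¹ := by
      rw [Real.exp_neg]
      exact inv_anti₀ (by positivity) key
    refine h2.trans (le_of_eq ?_)
    rw [div_pow]
    field_simp
  have hbd2 : Real.exp (-(a/(2*t))) ≤ Real.exp (-x') := by
    apply Real.exp_le_exp.mpr
    have h1 : a/(2*T) ≤ a/(2*t) := by
      apply div_le_div_of_nonneg_left ha0.le (by positivity)
      linarith
    linarith
  have hsplit : Real.exp (-(a/t)) = Real.exp (-(a/(2*t))) * Real.exp (-(a/(2*t))) := by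
    rw [← Real.exp_add]
    congr 1
    field_simp
    ring
  have hfac : (2*π*α*t)^(-(d:ℝ)/2) = (2*π*α)^(-(d:ℝ)/2) * t^(-(d:ℝ)/2) := by
    rw [← Real.mul_rpow (le_of_lt h2πα) ht.le]
  have hpowt : t^(-(d:ℝ)/2) * (2*t)^d ≤ 2^d * T^((d:ℝ)/2) := by
    rw [mul_pow]
    have ht2 : t^(-(d:ℝ)/2) * t^d = t^((d:ℝ)/2) := by
      rw [← Real.rpow_natCast t d, ← Real.rpow_add ht]
      congr 1
      ring
    calc t^(-(d:ℝ)/2) * (2^d * t^d) = 2^d * (t^(-(d:ℝ)/2) * t^d) := by ring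
      _ = 2^d * t^((d:ℝ)/2) := by rw [ht2]
      _ ≤ 2^d * T^((d:ℝ)/2) := by
          apply mul_le_mul_of_nonneg_left _ (by positivity)
          exact Real.rpow_le_rpow ht.le htT (by positivity)
  calc (2*π*α*t)^(-(d:ℝ)/2) * Real.exp (-(a/t))
      = (2*π*α)^(-(d:ℝ)/2) * t^(-(d:ℝ)/2)
        * (Real.exp (-(a/(2*t))) * Real.exp (-(a/(2*t)))) := by
        rw [hfac, hsplit]; try ring
    _ ≤ (2*π*α)^(-(d:ℝ)/2) * t^(-(d:ℝ)/2)
        * (((d.factorial : ℝ) * (2*t)^d / a^d) * Real.exp (-x')) := by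
        apply mul_le_mul_of_nonneg_left _ (by positivity)
        exact mul_le_mul hbd1 hbd2 (Real.exp_pos _).le (by positivity)
    _ = (2*π*α)^(-(d:ℝ)/2) * (d.factorial : ℝ) * (t^(-(d:ℝ)/2) * (2*t)^d) / a^d
        * Real.exp (-x') := by ring
    _ ≤ (2*π*α)^(-(d:ℝ)/2) * (d.factorial : ℝ) * (2^d * T^((d:ℝ)/2)) / a^d
        * Real.exp (-x') := by
        apply mul_le_mul_of_nonneg_right _ (Real.exp_pos _).le
        apply div_le_div_of_nonneg_right ?_ (by positivity)
        exact mul_le_mul_of_nonneg_left hpowt (by positivity)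
    _ ≤ (2*π*α)^(-(d:ℝ)/2) * (d.factorial : ℝ) * 2^d * T^((d:ℝ)/2) * Real.exp (-x') := by
        apply mul_le_mul_of_nonneg_right _ (Real.exp_pos _).le
        calc (2*π*α)^(-(d:ℝ)/2) * (d.factorial : ℝ) * (2^d * T^((d:ℝ)/2)) / a^d
            ≤ (2*π*α)^(-(d:ℝ)/2) * (d.factorial : ℝ) * (2^d * T^((d:ℝ)/2)) :=
              div_le_self (by positivity) (one_le_pow₀ ha1)
          _ = (2*π*α)^(-(d:ℝ)/2) * (d.factorial : ℝ) * 2^d * T^((d:ℝ)/2) := by ring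

lemma heatP_bound {d : ℕ} {α T : ℝ} (hα : 0 < α) (hT : 0 < T)
    {ψ : Euc d → ℝ} (hcont : Continuous ψ) (hc : HasCompactSupport ψ) :
    ∃ C > (0:ℝ), ∀ t ∈ Set.Icc (0:ℝ) T, ∀ x : Euc d,
      |heatP d α t ψ x| ≤ C * Real.exp (-‖x‖) := by
  obtain ⟨x₀, hx₀⟩ := hcont.abs.exists_forall_ge_of_hasCompactSupport hc.abs
  obtain ⟨M, hM0, hM⟩ : ∃ M, 0 ≤ M ∧ ∀ y, |ψ y| ≤ M := ⟨|ψ x₀|, abs_nonneg _, hx₀⟩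
  obtain ⟨r, hr⟩ := (Metric.isBounded_iff_subset_closedBall 0).mp hc.isBounded
  obtain ⟨R, hR1, hRsupp⟩ : ∃ R, 1 ≤ R ∧ tsupport ψ ⊆ Metric.closedBall 0 R :=
    ⟨max r 1, le_max_right _ _,
      hr.trans (Metric.closedBall_subset_closedBall (le_max_left _ _))⟩
  have hR0 : 0 < R := lt_of_lt_of_le one_pos hR1
  obtain ⟨V, hV0, hV⟩ : ∃ V, 0 ≤ V ∧
      (volume (Metric.closedBall (0:Euc d) R)).toReal = V :=
    ⟨_, ENNReal.toReal_nonneg, rfl⟩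
  have hfact : (0:ℝ) < (d.factorial : ℝ) := by exact_mod_cast d.factorial_pos
  have h2πα : (0:ℝ) < 2*π*α := by positivity
  obtain ⟨K2, hK2pos, hK2⟩ : ∃ K2, 0 < K2 ∧
      (2*π*α)^(-(d:ℝ)/2) * (d.factorial : ℝ) * 2^d * T^((d:ℝ)/2) = K2 :=
    ⟨_, by positivity, rfl⟩
  obtain ⟨R₀, hR₀pos, hR₀⟩ : ∃ R₀, 0 < R₀ ∧ 2*R + 16*α*T + 2*α + 2 = R₀ :=
    ⟨_, by positivity, rfl⟩
  refine ⟨max ((M+1) * Real.exp R₀) (M * K2 * V + 1),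
    lt_of_lt_of_le (by positivity) (le_max_right _ _), ?_⟩
  rintro t ⟨ht0, htT⟩ x
  have boundA : |heatP d α t ψ x| ≤ M := by
    rcases eq_or_lt_of_le ht0 with h0 | ht
    · rw [← h0, heatP_zero]; exact hM x
    · exact heatP_abs_le hα ht hcont hc hM x
  have boundB : R₀ ≤ ‖x‖ → |heatP d α t ψ x| ≤ M * K2 * V * Real.exp (-‖x‖) := by
    intro hx
    obtain ⟨hs0, ha1, hax⟩ := arith_facts hα hT hR1 (by linarith)
    rcases eq_or_lt_of_le ht0 with h0 | ht
    · rw [← h0, heatP_zero]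
      have hxout : x ∉ tsupport ψ := by
        intro hmem
        have := mem_closedBall_zero_iff.mp (hRsupp hmem)
        linarith
      rw [image_eq_zero_of_notMem_tsupport hxout]
      simp only [abs_zero]
      positivity
    · have hfar := heatP_far hα ht hcont hRsupp hM hM0 (x := x) (s := ‖x‖ - R) hs0.le
        (fun y hy => by
          have hy' : ‖y‖ ≤ R := mem_closedBall_zero_iff.mp hy
          linarith [norm_sub_norm_le x y])
      rw [hV] at hfar
      refine hfar.trans ?_
      have hg := gkm_bound (d := d) hα hT ht htT ha1 hax
      rw [hK2] at hg
      have hexp : (-((‖x‖-R)^2/(2*α)/t)) = (-((‖x‖-R)^2/(2*α))/t) := by rw [neg_div]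
      calc M * ((2*π*α*t)^(-(d:ℝ)/2) * Real.exp (-((‖x‖-R)^2/(2*α)/t))) * V
          ≤ M * (K2 * Real.exp (-‖x‖)) * V := by
            apply mul_le_mul_of_nonneg_right _ hV0
            apply mul_le_mul_of_nonneg_left _ hM0
            exact hg
        _ = M * K2 * V * Real.exp (-‖x‖) := by ring
  rcases le_total ‖x‖ R₀ with hx | hx
  · calc |heatP d α t ψ x| ≤ M := boundA
      _ ≤ (M+1) * Real.exp R₀ * Real.exp (-‖x‖) := by
          rw [mul_assoc, ← Real.exp_add]
          nlinarith [Real.one_le_exp (by linarith : (0:ℝ) ≤ R₀ + -‖x‖)]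
      _ ≤ _ := mul_le_mul_of_nonneg_right (le_max_left _ _) (Real.exp_pos _).le
  · calc |heatP d α t ψ x| ≤ M * K2 * V * Real.exp (-‖x‖) := boundB hx
      _ ≤ (M * K2 * V + 1) * Real.exp (-‖x‖) := by
          apply mul_le_mul_of_nonneg_right (by linarith) (Real.exp_pos _).le
      _ ≤ _ := mul_le_mul_of_nonneg_right (le_max_right _ _) (Real.exp_pos _).le

lemma pderivIter_props {d : ℕ} (i : Fin d) (n : ℕ) {ψ : Euc d → ℝ}
    (h1 : ContDiff ℝ (⊤:ℕ∞) ψ) (h2 : HasCompactSupport ψ) :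
    ContDiff ℝ (⊤:ℕ∞) (pderivIter i n ψ) ∧ HasCompactSupport (pderivIter i n ψ) ∧
      ∀ {α t : ℝ}, 0 < α → 0 < t →
        pderivIter i n (heatP d α t ψ) = heatP d α t (pderivIter i n ψ) := by
  induction n with
  | zero => exact ⟨h1, h2, fun _ _ => rfl⟩
  | succ n ih =>
    obtain ⟨ih1, ih2, ih3⟩ := ih
    refine ⟨pderivI_contDiff i ih1, pderivI_hasCompactSupport i ih2, ?_⟩
    intro α t hα ht
    show pderivI i (pderivIter i n (heatP d α t ψ))
        = heatP d α t (pderivI i (pderivIter i n ψ))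
    rw [ih3 hα ht, pderivI_heatP hα ht i ih1 ih2]

lemma Dmulti_foldr_props {d : ℕ} (β : Fin d → ℕ) (l : List (Fin d)) {ψ : Euc d → ℝ}
    (h1 : ContDiff ℝ (⊤:ℕ∞) ψ) (h2 : HasCompactSupport ψ) :
    ContDiff ℝ (⊤:ℕ∞) (l.foldr (fun i g => pderivIter i (β i) g) ψ) ∧
    HasCompactSupport (l.foldr (fun i g => pderivIter i (β i) g) ψ) ∧
    ∀ {α t : ℝ}, 0 < α → 0 < t →
      l.foldr (fun i g => pderivIter i (β i) g) (heatP d α t ψ)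
        = heatP d α t (l.foldr (fun i g => pderivIter i (β i) g) ψ) := by
  induction l with
  | nil => exact ⟨h1, h2, fun _ _ => rfl⟩
  | cons i l ih =>
    obtain ⟨ih1, ih2, ih3⟩ := ih
    obtain ⟨p1, p2, p3⟩ := pderivIter_props i (β i) ih1 ih2
    refine ⟨p1, p2, ?_⟩
    intro α t hα ht
    show pderivIter i (β i) (l.foldr (fun i g => pderivIter i (β i) g) (heatP d α t ψ))
        = heatP d α t (pderivIter i (β i) (l.foldr (fun i g => pderivIter i (β i) g) ψ))
    rw [ih3 hα ht, p3 hα ht]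


/-- for smooth compactly supported `φ`, `T > 0` and a multi-index `β`, there is
`C > 0` with `|D^β P_t φ(x)| ≤ C e^{-|x|}` for all `t ∈ [0,T]` and `x`. -/
theorem statement9 (d : ℕ) (hd : 1 ≤ d) (α : ℝ) (hα : 0 < α)
    (φ : Euc d → ℝ) (hφ : ContDiff ℝ (⊤ : ℕ∞) φ) (hsupp : HasCompactSupport φ)
    (T : ℝ) (hT : 0 < T) (β : Fin d → ℕ) :
    ∃ C > (0 : ℝ), ∀ t ∈ Set.Icc (0 : ℝ) T, ∀ x : Euc d,
      |Dmulti β (heatP d α t φ) x| ≤ C * Real.exp (-‖x‖) := by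
  obtain ⟨hD1, hD2, hD3⟩ := Dmulti_foldr_props β (List.finRange d) hφ hsupp
  obtain ⟨C, hC, hbound⟩ := heatP_bound (T := T) hα hT hD1.continuous hD2
  refine ⟨C, hC, ?_⟩
  rintro t ⟨ht0, htT⟩ x
  rcases eq_or_lt_of_le ht0 with h0 | ht
  · rw [Dmulti, ← h0, heatP_zero]
    have h := hbound 0 ⟨le_rfl, hT.le⟩ x
    rw [heatP_zero] at h
    exact h
  · have heq : Dmulti β (heatP d α t φ) = heatP d α t (Dmulti β φ) := hD3 hα ht
    rw [heq]
    exact hbound t ⟨ht0, htT⟩ x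
end
end

section
/- Let (μ_n)_{n≥1} and μ be tempered measures on ℝ^d such that ∫ φ dμ_n → ∫ φ dμ for every Schwartz function φ, and let A ⊂ ℝ^d be a bounded Borel set with μ(∂A) = 0, where ∂A denotes the topological boundary of A. Then lim_{n→∞} μ_n(A) = μ(A). -/
open MeasureTheory Real Filter Set
open scoped ContDiff Manifold ENNReal NNReal

noncomputable section

noncomputable def toSchwartz {d : ℕ} (f : Euc d → ℝ) (hf : ContDiff ℝ ∞ f)
    (h : HasCompactSupport f) : SchwartzMap (Euc d) ℝ where
  toFun := f
  smooth' := hf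
  decay' := by
    intro k n
    obtain ⟨R, hR0, hR⟩ := h.isBounded.subset_closedBall_lt 0 0
    obtain ⟨C, hC⟩ := (hf.continuous_iteratedFDeriv (mod_cast le_top)).bounded_above_of_compact_support
      (h.iteratedFDeriv n)
    refine ⟨R ^ k * C, fun x => ?_⟩
    by_cases hx : x ∈ tsupport f
    · have hxR : ‖x‖ ≤ R := by
        have := hR hx; rwa [Metric.mem_closedBall, dist_zero_right] at this
      exact mul_le_mul (pow_le_pow_left₀ (norm_nonneg x) hxR k) (hC x) (norm_nonneg _)
        (pow_nonneg hR0.le k)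
    · have h0 : iteratedFDeriv ℝ n f x = 0 := by
        have := support_iteratedFDeriv_subset (𝕜 := ℝ) (f := f) n
        by_contra hne
        exact hx (this hne)
      rw [h0, norm_zero, mul_zero]
      exact mul_nonneg (pow_nonneg hR0.le k) ((norm_nonneg _).trans (hC x))

@[simp] lemma toSchwartz_apply {d : ℕ} (f : Euc d → ℝ) (hf : ContDiff ℝ ∞ f)
    (h : HasCompactSupport f) (x : Euc d) : toSchwartz f hf h x = f x := rfl

lemma smooth_urysohn {d : ℕ} {K U : Set (Euc d)} (hK : IsCompact K) (hU : IsOpen U)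
    (hKU : K ⊆ U) :
    ∃ f : Euc d → ℝ, ContDiff ℝ ∞ f ∧ EqOn f 1 K ∧ (∀ x ∉ U, f x = 0) ∧
      ∀ x, f x ∈ Icc (0 : ℝ) 1 := by
  obtain ⟨f, hf0, hf1, hficc⟩ := exists_contMDiffMap_zero_one_of_isClosed (𝓘(ℝ, Euc d)) (n := ⊤)
    hU.isClosed_compl hK.isClosed (disjoint_left.mpr fun x hx hxK => hx (hKU hxK))
  exact ⟨f, f.contMDiff.contDiff, hf1, fun x hx => hf0 hx, hficc⟩


/-- Portmanteau theorem for tempered measures: if `μ_n → μ` against all Schwartz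
functions and `A` is a bounded Borel set with `μ(∂A) = 0`, then `μ_n(A) → μ(A)`. -/
theorem statement10 (d : ℕ) (hd : 1 ≤ d)
    (μn : ℕ → Measure (Euc d)) (μ : Measure (Euc d))
    (hμn : ∀ n, IsTempered (μn n)) (hμ : IsTempered μ)
    (hconv : ∀ φ : SchwartzMap (Euc d) ℝ,
      Tendsto (fun n => ∫ x, φ x ∂(μn n)) atTop (nhds (∫ x, φ x ∂μ)))
    (A : Set (Euc d)) (hA : MeasurableSet A) (hAb : Bornology.IsBounded A)
    (hfr : μ (frontier A) = 0) :
    Tendsto (fun n => μn n A) atTop (nhds (μ A)) := by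
  haveI := hμ.1
  have hclos : μ (closure A) = μ A := by
    refine le_antisymm ?_ (measure_mono subset_closure)
    calc μ (closure A) = μ (A ∪ frontier A) := by rw [← closure_eq_self_union_frontier]
      _ ≤ μ A + μ (frontier A) := measure_union_le _ _
      _ = μ A := by rw [hfr, add_zero]
  have hint : μ (interior A) = μ A := by
    refine le_antisymm (measure_mono interior_subset) ?_
    calc μ A ≤ μ (interior A ∪ frontier A) := by
          rw [← closure_eq_interior_union_frontier]; exact measure_mono subset_closure
      _ ≤ μ (interior A) + μ (frontier A) := measure_union_le _ _
      _ = μ (interior A) := by rw [hfr, add_zero]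
  have hAfin : μ A ≠ ⊤ := by
    rw [← hclos]; exact hAb.isCompact_closure.measure_lt_top.ne
  -- an auxiliary equality between integrals and lintegrals
  have key : ∀ (ν : Measure (Euc d)), IsTempered ν → ∀ (f : Euc d → ℝ)
      (hf : ContDiff ℝ ∞ f) (hc : HasCompactSupport f), (∀ x, 0 ≤ f x) →
      ENNReal.ofReal (∫ x, f x ∂ν) = ∫⁻ x, ENNReal.ofReal (f x) ∂ν := by
    intro ν hν f hf hc hpos
    exact ofReal_integral_eq_lintegral_ofReal (hν.2 (toSchwartz f hf hc))
      (Eventually.of_forall hpos)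
  have hlimsup : limsup (fun n => μn n A) atTop ≤ μ A := by
    refine ENNReal.le_of_forall_pos_le_add fun ε hε hfin => ?_
    have hlt : μ (closure A) < μ A + ε := by
      rw [hclos]; exact ENNReal.lt_add_right hAfin (by exact_mod_cast hε.ne')
    obtain ⟨U, hUA, hUopen, hUlt⟩ := Set.exists_isOpen_lt_of_lt _ _ hlt
    obtain ⟨R, hR⟩ := hAb.closure.subset_ball 0
    set V := U ∩ Metric.ball 0 R with hV
    have hVopen : IsOpen V := hUopen.inter Metric.isOpen_ball
    have hAV : closure A ⊆ V := subset_inter hUA hR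
    obtain ⟨f, hfsm, hf1, hf0, hficc⟩ := smooth_urysohn hAb.isCompact_closure hVopen hAV
    have hfc : HasCompactSupport f := by
      refine HasCompactSupport.of_support_subset_isCompact
        (isCompact_closedBall (0 : Euc d) R) fun x hx => ?_
      have hxV : x ∈ V := by by_contra h; exact hx (hf0 x h)
      exact Metric.ball_subset_closedBall hxV.2
    have hmono : ∀ n, μn n A ≤ ENNReal.ofReal (∫ x, f x ∂(μn n)) := by
      intro n
      rw [key _ (hμn n) f hfsm hfc (fun x => (hficc x).1)]
      calc μn n A = ∫⁻ x, A.indicator (fun _ => (1 : ℝ≥0∞)) x ∂(μn n) :=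
            (lintegral_indicator_one hA).symm
        _ ≤ ∫⁻ x, ENNReal.ofReal (f x) ∂(μn n) := by
            refine lintegral_mono fun x => ?_
            by_cases hx : x ∈ A
            · simp [hx, hf1 (subset_closure hx)]
            · simp [hx]
    have hup : ENNReal.ofReal (∫ x, f x ∂μ) ≤ μ V := by
      rw [key _ hμ f hfsm hfc (fun x => (hficc x).1)]
      calc ∫⁻ x, ENNReal.ofReal (f x) ∂μ
          ≤ ∫⁻ x, V.indicator (fun _ => (1 : ℝ≥0∞)) x ∂μ := by
            refine lintegral_mono fun x => ?_
            by_cases hx : x ∈ V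
            · simpa [hx] using ENNReal.ofReal_le_one.mpr (hficc x).2
            · simp [hx, hf0 x hx]
        _ = μ V := lintegral_indicator_one hVopen.measurableSet
    have htend : Tendsto (fun n => ENNReal.ofReal (∫ x, f x ∂(μn n))) atTop
        (nhds (ENNReal.ofReal (∫ x, f x ∂μ))) :=
      (ENNReal.continuous_ofReal.tendsto _).comp (hconv (toSchwartz f hfsm hfc))
    calc limsup (fun n => μn n A) atTop
        ≤ limsup (fun n => ENNReal.ofReal (∫ x, f x ∂(μn n))) atTop :=
          limsup_le_limsup (Eventually.of_forall hmono)
      _ = ENNReal.ofReal (∫ x, f x ∂μ) := htend.limsup_eq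
      _ ≤ μ V := hup
      _ ≤ μ U := measure_mono inter_subset_left
      _ ≤ μ A + ε := hUlt.le
  have hliminf : μ A ≤ liminf (fun n => μn n A) atTop := by
    refine ENNReal.le_of_forall_pos_le_add fun ε hε hfin => ?_
    have hintfin : μ (interior A) ≠ ⊤ := by rw [hint]; exact hAfin
    obtain ⟨K, hKA, hKc, hKlt⟩ := (isOpen_interior (s := A)).measurableSet.exists_isCompact_lt_add
      hintfin (ε := (ε : ℝ≥0∞)) (by exact_mod_cast hε.ne')
    obtain ⟨g, hgsm, hg1, hg0, hgicc⟩ := smooth_urysohn hKc isOpen_interior hKA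
    have hgc : HasCompactSupport g := by
      refine HasCompactSupport.of_support_subset_isCompact hAb.isCompact_closure fun x hx => ?_
      have hxI : x ∈ interior A := by by_contra h; exact hx (hg0 x h)
      exact subset_closure (interior_subset hxI)
    have hlow : ∀ n, ENNReal.ofReal (∫ x, g x ∂(μn n)) ≤ μn n A := by
      intro n
      rw [key _ (hμn n) g hgsm hgc (fun x => (hgicc x).1)]
      calc ∫⁻ x, ENNReal.ofReal (g x) ∂(μn n)
          ≤ ∫⁻ x, A.indicator (fun _ => (1 : ℝ≥0∞)) x ∂(μn n) := by
            refine lintegral_mono fun x => ?_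
            by_cases hx : x ∈ A
            · simpa [hx] using ENNReal.ofReal_le_one.mpr (hgicc x).2
            · have : x ∉ interior A := fun hxi => hx (interior_subset hxi)
              simp [hx, hg0 x this]
        _ = μn n A := lintegral_indicator_one hA
    have hKg : μ K ≤ ENNReal.ofReal (∫ x, g x ∂μ) := by
      rw [key _ hμ g hgsm hgc (fun x => (hgicc x).1)]
      calc μ K = ∫⁻ x, K.indicator (fun _ => (1 : ℝ≥0∞)) x ∂μ :=
            (lintegral_indicator_one hKc.measurableSet).symm
        _ ≤ ∫⁻ x, ENNReal.ofReal (g x) ∂μ := by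
            refine lintegral_mono fun x => ?_
            by_cases hx : x ∈ K
            · simp [hx, hg1 hx]
            · simp [hx]
    have htend : Tendsto (fun n => ENNReal.ofReal (∫ x, g x ∂(μn n))) atTop
        (nhds (ENNReal.ofReal (∫ x, g x ∂μ))) :=
      (ENNReal.continuous_ofReal.tendsto _).comp (hconv (toSchwartz g hgsm hgc))
    calc μ A = μ (interior A) := hint.symm
      _ ≤ μ K + ε := hKlt.le
      _ ≤ ENNReal.ofReal (∫ x, g x ∂μ) + ε := add_le_add_left hKg _
      _ = liminf (fun n => ENNReal.ofReal (∫ x, g x ∂(μn n))) atTop + ε := by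
          rw [htend.liminf_eq]
      _ ≤ liminf (fun n => μn n A) atTop + ε :=
          add_le_add_left (liminf_le_liminf (Eventually.of_forall hlow)) _
  exact tendsto_of_le_liminf_of_limsup_le hliminf hlimsup
end
end

section
/- Let d ≥ 1 and t ≥ 1/2. Let (X_k)_{k≥1} be independent random vectors in ℝ^d, where X_k is Gaussian with mean √(ln k)·e₁ (e₁ = (1,0,…,0)) and covariance matrix t·I_d. Then almost surely X_k ∈ [0,1]^d for infinitely many k; in particular, almost surely the counting measure Σ_k δ_{X_k} assigns infinite mass to the unit cube [0,1]^d. -/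
open MeasureTheory ProbabilityTheory Real Filter Set

noncomputable section

/-- if `(X_k)_{k ≥ 1}` are independent Gaussian vectors in `ℝ^d` with means
`√(ln k)·e₁` and covariance `t·I_d` for `t ≥ 1/2` (here indexed by `k : ℕ`, with `X k` the
`(k+1)`-st vector), then almost surely infinitely many of them lie in the unit cube; in
particular the counting measure `Σ_k δ_{X_k}` almost surely gives infinite mass to `[0,1]^d`. -/
theorem statement12 (d : ℕ) (hd : 1 ≤ d) (t : ℝ) (ht : 1 / 2 ≤ t)
    (Ω : Type*) [MeasureSpace Ω] [IsProbabilityMeasure (ℙ : Measure Ω)]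
    (X : ℕ → Ω → Euc d) (hmeas : ∀ k, Measurable (X k))
    (hindep : ProbabilityTheory.iIndepFun X ℙ)
    (hlaw : ∀ k : ℕ, Measure.map (X k) ℙ =
      gaussE d (Real.sqrt (Real.log ((k : ℝ) + 1)) •
        EuclideanSpace.single (⟨0, hd⟩ : Fin d) 1) t) :
    ∀ᵐ ω ∂(ℙ : Measure Ω), {k : ℕ | X k ω ∈ unitCube d}.Infinite ∧
      (Measure.sum fun k => Measure.dirac (X k ω)) (unitCube d) = ⊤ := by
  classical
  have ht0 : (0:ℝ) < t := by linarith
  set i0 : Fin d := ⟨0, hd⟩ with hi0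
  -- measurability of the cube
  have hcube : MeasurableSet (unitCube d) := by
    have h : unitCube d = ⋂ i, (fun x : Euc d => x i) ⁻¹' Set.Icc (0:ℝ) 1 := by
      ext x; simp [unitCube]
    rw [h]
    exact MeasurableSet.iInter fun i =>
      ((EuclideanSpace.proj (𝕜 := ℝ) i).continuous.measurable) measurableSet_Icc
  -- the cube has volume 1
  have hvol : volume (unitCube d) = 1 := by
    have hpre : unitCube d = (MeasurableEquiv.toLp 2 (Fin d → ℝ)).symm ⁻¹'
        (Set.univ.pi fun _ => Set.Icc (0:ℝ) 1) := by
      ext x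
      exact ⟨fun h i _ => h i, fun h i => h i trivial⟩
    rw [hpre, (EuclideanSpace.volume_preserving_symm_measurableEquiv_toLp (Fin d)).measure_preimage
      ((MeasurableSet.univ_pi fun _ => measurableSet_Icc).nullMeasurableSet),
      volume_pi_pi]
    simp [Real.volume_Icc]
  -- the constant C
  set C : ℝ := (2 * π * t) ^ (-(d:ℝ)/2) * Real.exp (-(d:ℝ)/(2*t)) with hC
  have hP : (0:ℝ) < (2 * π * t) ^ (-(d:ℝ)/2) := Real.rpow_pos_of_pos (by positivity) _
  have hCpos : 0 < C := mul_pos hP (Real.exp_pos _)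
  -- lower bound on the probability of each event
  have key : ∀ k : ℕ, ENNReal.ofReal (C * (1/((k:ℝ)+1))) ≤ ℙ (X k ⁻¹' unitCube d) := by
    intro k
    have hmap : (ℙ : Measure Ω) (X k ⁻¹' unitCube d) =
        Measure.map (X k) ℙ (unitCube d) := (Measure.map_apply (hmeas k) hcube).symm
    rw [hmap, hlaw k]
    set L : ℝ := Real.log ((k:ℝ)+1) with hL
    have hk0 : (0:ℝ) ≤ (k:ℝ) := Nat.cast_nonneg k
    have hk1 : (1:ℝ) ≤ (k:ℝ)+1 := by linarith
    have hL0 : 0 ≤ L := Real.log_nonneg hk1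
    set m : Euc d := Real.sqrt L • EuclideanSpace.single i0 1 with hm
    -- pointwise lower bound of the density on the cube
    have hpt : ∀ x ∈ unitCube d, C * (1/((k:ℝ)+1)) ≤
        (2 * π * t) ^ (-(d:ℝ)/2) * Real.exp (-‖x - m‖ ^ 2 / (2*t)) := by
      intro x hx
      -- bound on the norm
      have hnorm : ‖x - m‖ ^ 2 ≤ L + d := by
        have hsq : ‖x - m‖ ^ 2 = ∑ i, (x i - m i) ^ 2 := by
          rw [EuclideanSpace.norm_eq, Real.sq_sqrt (by positivity)]
          congr 1
          ext i
          rw [PiLp.sub_apply, Real.norm_eq_abs, sq_abs]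
        rw [hsq]
        have hbound : ∀ i : Fin d, (x i - m i) ^ 2 ≤ (if i = i0 then L else 0) + 1 := by
          intro i
          have hmi : m i = if i = i0 then Real.sqrt L else 0 := by
            rw [hm, PiLp.smul_apply, EuclideanSpace.single_apply]
            split <;> simp
          have hx1 : 0 ≤ x i := (hx i).1
          have hx2 : x i ≤ 1 := (hx i).2
          by_cases h : i = i0
          · rw [hmi, if_pos h, if_pos h]
            nlinarith [Real.sq_sqrt hL0, Real.sqrt_nonneg L]
          · rw [hmi, if_neg h, if_neg h]
            nlinarith
        calc ∑ i, (x i - m i) ^ 2 ≤ ∑ i : Fin d, ((if i = i0 then L else 0) + 1) :=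
              Finset.sum_le_sum fun i _ => hbound i
          _ = L + d := by
              rw [Finset.sum_add_distrib, Finset.sum_ite_eq' Finset.univ i0 (fun _ => L)]
              simp [Finset.card_univ]
      -- comparison of densities
      have hpow : 1/((k:ℝ)+1) ≤ Real.exp (-L/(2*t)) := by
        have h1 : Real.exp (-L/(2*t)) = ((k:ℝ)+1) ^ (-(1:ℝ)/(2*t)) := by
          rw [Real.rpow_def_of_pos (by linarith), hL]
          congr 1
          field_simp
        rw [h1]
        have h2 : ((k:ℝ)+1) ^ (-(1:ℝ)) ≤ ((k:ℝ)+1) ^ (-(1:ℝ)/(2*t)) := by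
          apply Real.rpow_le_rpow_of_exponent_le hk1
          rw [neg_div, neg_le_neg_iff, div_le_one (by linarith)]
          linarith
        calc 1/((k:ℝ)+1) = ((k:ℝ)+1) ^ (-(1:ℝ)) := by
              rw [Real.rpow_neg_one]; ring
          _ ≤ _ := h2
      have hexp : Real.exp (-(L + d)/(2*t)) ≤ Real.exp (-‖x - m‖ ^ 2/(2*t)) := by
        apply Real.exp_le_exp.2
        apply div_le_div_of_nonneg_right ?_ ?_ |>.trans_eq rfl
        case _ => linarith
        case _ => linarith
      have hsplit : Real.exp (-(L + (d:ℝ))/(2*t)) =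
          Real.exp (-L/(2*t)) * Real.exp (-(d:ℝ)/(2*t)) := by
        rw [← Real.exp_add]; congr 1; field_simp; ring
      calc C * (1/((k:ℝ)+1))
          ≤ (2 * π * t) ^ (-(d:ℝ)/2) * Real.exp (-(d:ℝ)/(2*t)) * Real.exp (-L/(2*t)) := by
            rw [hC]
            exact mul_le_mul_of_nonneg_left hpow (by positivity)
        _ = (2 * π * t) ^ (-(d:ℝ)/2) * Real.exp (-(L + (d:ℝ))/(2*t)) := by
            rw [hsplit]; ring
        _ ≤ (2 * π * t) ^ (-(d:ℝ)/2) * Real.exp (-‖x - m‖ ^ 2/(2*t)) :=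
            mul_le_mul_of_nonneg_left hexp hP.le
    -- integrate the pointwise bound
    rw [gaussE, withDensity_apply _ hcube]
    calc ENNReal.ofReal (C * (1/((k:ℝ)+1)))
        = ∫⁻ _ in unitCube d, ENNReal.ofReal (C * (1/((k:ℝ)+1))) ∂volume := by
          rw [setLIntegral_const, hvol, mul_one]
      _ ≤ ∫⁻ x in unitCube d, ENNReal.ofReal
            ((2 * π * t) ^ (-(d:ℝ)/2) * Real.exp (-‖x - m‖ ^ 2 / (2*t))) ∂volume :=
          setLIntegral_mono' hcube fun x hx => ENNReal.ofReal_le_ofReal (hpt x hx)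
  -- the events are independent
  have hsets : iIndepSet (fun k => X k ⁻¹' unitCube d) ℙ := by
    rw [iIndepSet_iff_meas_biInter (fun k => hmeas k hcube)]
    intro S
    exact hindep.measure_inter_preimage_eq_mul S (fun i _ => hcube)
  -- divergence of the sum of probabilities
  have hdiv : ∑' k : ℕ, ENNReal.ofReal (C * (1/((k:ℝ)+1))) = ⊤ := by
    have hrw : (fun k : ℕ => ENNReal.ofReal (C * (1/((k:ℝ)+1)))) =
        fun k : ℕ => (((C * (1/((k:ℝ)+1))).toNNReal : NNReal) : ENNReal) := rfl
    rw [hrw, ENNReal.tsum_coe_eq_top_iff_not_summable_coe]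
    intro hsummable
    have h0 : Summable (fun k : ℕ => C * (1/((k:ℝ)+1))) := by
      refine hsummable.congr fun k => ?_
      exact Real.coe_toNNReal _ (by positivity)
    have h2 : Summable (fun k : ℕ => 1/((k:ℝ)+1)) := by
      have := h0.mul_left C⁻¹
      simpa [← mul_assoc, inv_mul_cancel₀ hCpos.ne'] using this
    have h3 : Summable (fun n : ℕ => 1/(n:ℝ)) := by
      refine (summable_nat_add_iff 1).mp ?_
      refine h2.congr fun k => ?_
      push_cast; ring
    exact Real.not_summable_one_div_natCast h3
  have hsum : (∑' k, (ℙ : Measure Ω) (X k ⁻¹' unitCube d)) = ⊤ :=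
    top_le_iff.mp (hdiv ▸ ENNReal.tsum_le_tsum key)
  -- second Borel-Cantelli lemma
  have hBC : (ℙ : Measure Ω) (limsup (fun k => X k ⁻¹' unitCube d) atTop) = 1 :=
    ProbabilityTheory.measure_limsup_eq_one (fun k => hmeas k hcube) hsets hsum
  have hms : MeasurableSet (limsup (fun k => X k ⁻¹' unitCube d) atTop) :=
    MeasurableSet.measurableSet_limsup fun k => hmeas k hcube
  have h0 : (ℙ : Measure Ω) (limsup (fun k => X k ⁻¹' unitCube d) atTop)ᶜ = 0 := by
    rw [measure_compl hms (measure_ne_top _ _), hBC, measure_univ]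
    simp
  filter_upwards [measure_eq_zero_iff_ae_notMem.mp h0] with ω hω
  have hmem : ω ∈ limsup (fun k => X k ⁻¹' unitCube d) atTop := not_not.mp hω
  rw [mem_limsup_iff_frequently_mem] at hmem
  have hinf : {k : ℕ | X k ω ∈ unitCube d}.Infinite :=
    Nat.frequently_atTop_iff_infinite.mp hmem
  refine ⟨hinf, ?_⟩
  rw [Measure.sum_apply _ hcube]
  have hrw : ∀ k : ℕ, Measure.dirac (X k ω) (unitCube d) =
      {k : ℕ | X k ω ∈ unitCube d}.indicator (fun _ => (1:ENNReal)) k := by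
    intro k
    rw [Measure.dirac_apply' _ hcube]
    by_cases h : X k ω ∈ unitCube d
    · rw [Set.indicator_of_mem h, Set.indicator_of_mem (by exact h)]; rfl
    · rw [Set.indicator_of_notMem h, Set.indicator_of_notMem (by exact h)]
  calc ∑' k, Measure.dirac (X k ω) (unitCube d)
      = ∑' k, {k : ℕ | X k ω ∈ unitCube d}.indicator (fun _ => (1:ENNReal)) k := tsum_congr hrw
    _ = ∑' _ : {k : ℕ | X k ω ∈ unitCube d}, (1:ENNReal) := (tsum_subtype _ _).symm
    _ = ⊤ := by
        have := hinf.to_subtype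
        exact ENNReal.tsum_const_eq_top_of_ne_zero one_ne_zero
end
end

section
/- There exists a strictly positive Schwartz function κ on ℝ^d with κ(x) = e^{-|x|} for all x with |x| > 1; moreover, for any such κ there exists a constant C > 0 such that |∇κ(x)|² ≤ C κ(x) and |Δκ(x)| ≤ C κ(x) for all x ∈ ℝ^d. -/
open MeasureTheory Real Filter Set

noncomputable section

/-! ### Auxiliary constructions and lemmas for `statement17` -/

open scoped ContDiff

set_option synthInstance.maxHeartbeats 1000000
set_option maxHeartbeats 1000000

/-- A smooth interpolation: `st17eta t = √t` for `t ≥ 1`, and `st17eta t = 0` for `t ≤ 1/2`. -/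
def st17eta (t : ℝ) : ℝ := Real.smoothTransition (2 * t - 1) * Real.sqrt t

lemma st17eta_eq {t : ℝ} (ht : 1 ≤ t) : st17eta t = Real.sqrt t := by
  rw [st17eta, Real.smoothTransition.one_of_one_le (by linarith), one_mul]

lemma st17eta_contDiff : ContDiff ℝ ∞ st17eta := by
  rw [contDiff_iff_contDiffAt]
  intro t
  rcases lt_or_ge t (1/2 : ℝ) with h | h
  · refine (contDiffAt_const (c := 0)).congr_of_eventuallyEq ?_
    filter_upwards [Iio_mem_nhds h] with s hs
    have : Real.smoothTransition (2*s-1) = 0 :=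
      Real.smoothTransition.zero_of_nonpos (by simp only [mem_Iio] at hs; linarith)
    simp [st17eta, this]
  · exact (Real.smoothTransition.contDiffAt.comp _
      (by fun_prop)).mul (Real.contDiffAt_sqrt (by linarith))

/-- The radial profile `st17u t = exp (-st17eta t)`; equals `exp (-√t)` for `t ≥ 1`. -/
def st17u (t : ℝ) : ℝ := Real.exp (-st17eta t)

lemma st17u_contDiff : ContDiff ℝ ∞ st17u :=
  Real.contDiff_exp.comp st17eta_contDiff.neg

lemma st17u_pos (t : ℝ) : 0 < st17u t := Real.exp_pos _

lemma st17u_eq {t : ℝ} (ht : 1 ≤ t) : st17u t = Real.exp (-Real.sqrt t) := by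
  rw [st17u, st17eta_eq ht]

lemma st17u_iteratedDeriv (n : ℕ) : ∃ Q : Polynomial ℝ, ∀ t : ℝ, 1 < t →
    iteratedDeriv n st17u t = Real.exp (-Real.sqrt t) * Q.eval (Real.sqrt t)⁻¹ := by
  induction n with
  | zero => exact ⟨1, fun t ht => by simp [iteratedDeriv_zero, st17u_eq ht.le]⟩
  | succ n ih =>
    obtain ⟨Q, hQ⟩ := ih
    refine ⟨-(Polynomial.C (1/2 : ℝ) * (Polynomial.X * Q + Polynomial.X^3 * Q.derivative)),
      fun t ht => ?_⟩
    have ht0 : (0:ℝ) < t := by linarith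
    have hst : 0 < Real.sqrt t := Real.sqrt_pos.mpr ht0
    have hev : iteratedDeriv n st17u =ᶠ[nhds t]
        fun s => Real.exp (-Real.sqrt s) * Q.eval (Real.sqrt s)⁻¹ := by
      filter_upwards [Ioi_mem_nhds ht] with s hs
      exact hQ s hs
    rw [iteratedDeriv_succ, hev.deriv_eq]
    have h1 : HasDerivAt Real.sqrt (1/(2*Real.sqrt t)) t := Real.hasDerivAt_sqrt (ne_of_gt ht0)
    have h2 : HasDerivAt (fun s => Real.exp (-Real.sqrt s))
        (Real.exp (-Real.sqrt t) * -(1/(2*Real.sqrt t))) t :=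
      (Real.hasDerivAt_exp _).comp t h1.neg
    have h3 : HasDerivAt (fun s => (Real.sqrt s)⁻¹)
        (-(1/(2*Real.sqrt t)) / (Real.sqrt t)^2) t := h1.inv (ne_of_gt hst)
    have h4 : HasDerivAt (fun s => Q.eval (Real.sqrt s)⁻¹)
        (Q.derivative.eval (Real.sqrt t)⁻¹ * (-(1/(2*Real.sqrt t)) / (Real.sqrt t)^2)) t :=
      (Q.hasDerivAt _).comp t h3
    rw [(show HasDerivAt (fun s => Real.exp (-Real.sqrt s) * Q.eval (Real.sqrt s)⁻¹) _ t from h2.mul h4).deriv]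
    simp only [Polynomial.eval_neg, Polynomial.eval_mul, Polynomial.eval_add, Polynomial.eval_C,
      Polynomial.eval_X, Polynomial.eval_pow]
    have hsq : Real.sqrt t ^ 2 = t := Real.sq_sqrt ht0.le
    field_simp
    simp only [one_div]
    ring

lemma st17u_bound (n : ℕ) : ∃ B : ℝ, 0 ≤ B ∧ ∀ t : ℝ, 2 ≤ t →
    ‖iteratedFDeriv ℝ n st17u t‖ ≤ B * Real.exp (-Real.sqrt t) := by
  obtain ⟨Q, hQ⟩ := st17u_iteratedDeriv n
  obtain ⟨B, hB⟩ := (isCompact_Icc (a := (0:ℝ)) (b := 1)).exists_bound_of_continuousOn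
    (Q.continuous_aeval.continuousOn)
  refine ⟨max B 0, le_max_right _ _, fun t ht => ?_⟩
  have ht1 : (1:ℝ) < t := by linarith
  have hst : 1 ≤ Real.sqrt t := by
    rw [show (1:ℝ) = Real.sqrt 1 from (Real.sqrt_one).symm]
    exact Real.sqrt_le_sqrt (by linarith)
  have hmem : (Real.sqrt t)⁻¹ ∈ Icc (0:ℝ) 1 :=
    ⟨inv_nonneg.mpr (by linarith), inv_le_one_of_one_le₀ hst⟩
  rw [norm_iteratedFDeriv_eq_norm_iteratedDeriv, hQ t ht1]
  rw [norm_mul, Real.norm_eq_abs, Real.norm_eq_abs, abs_of_pos (Real.exp_pos _)]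
  rw [mul_comm]
  gcongr
  calc |Q.eval (Real.sqrt t)⁻¹| ≤ B := by simpa using hB _ hmem
    _ ≤ max B 0 := le_max_left _ _

/-- The inner product with a fixed vector, as a genuinely `ℝ`-linear continuous map. -/
def st17G (d : ℕ) : Euc d →L[ℝ] Euc d →L[ℝ] ℝ := innerSL ℝ

lemma st17G_norm (d : ℕ) : ‖st17G d‖ ≤ 1 := norm_innerSL_le ℝ

lemma st17q_fderiv (d : ℕ) :
    (fderiv ℝ (fun y : Euc d => ‖y‖^2)) = ⇑((2:ℝ) • st17G d) := by
  funext x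
  rw [(hasStrictFDerivAt_norm_sq x).hasFDerivAt.fderiv]
  ext y
  simp [st17G, two_smul, innerSL_apply_apply]
  rfl

lemma st17q_deriv_bound (d : ℕ) (i : ℕ) (hi : 1 ≤ i) (x : Euc d) :
    ‖iteratedFDeriv ℝ i (fun y : Euc d => ‖y‖^2) x‖ ≤ (2 + 2 * ‖x‖) ^ i := by
  set G : Euc d →L[ℝ] Euc d →L[ℝ] ℝ := (2:ℝ) • st17G d with hG
  have hnormx : (0:ℝ) ≤ ‖x‖ := norm_nonneg x
  have hD1 : (1:ℝ) ≤ 2 + 2 * ‖x‖ := by linarith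
  have hGnorm : ‖G‖ ≤ 2 := by
    rw [hG]
    calc ‖(2:ℝ) • st17G d‖ ≤ 2 * ‖st17G d‖ := by
          have := ContinuousLinearMap.opNorm_smul_le (2:ℝ) (st17G d); norm_num at this ⊢; exact this
      _ ≤ 2 * 1 := by have := st17G_norm d; linarith
      _ = 2 := by norm_num
  obtain ⟨m, rfl⟩ : ∃ m, i = m + 1 := ⟨i - 1, (Nat.succ_pred_eq_of_pos hi).symm⟩
  rw [← norm_iteratedFDeriv_fderiv, st17q_fderiv]
  rcases Nat.eq_zero_or_pos m with rfl | hm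
  · rw [norm_iteratedFDeriv_zero]
    calc ‖G x‖ ≤ ‖G‖ * ‖x‖ := G.le_opNorm x
      _ ≤ 2 * ‖x‖ := by nlinarith
      _ ≤ (2 + 2 * ‖x‖) ^ 1 := by rw [pow_one]; linarith
  · obtain ⟨p, rfl⟩ : ∃ p, m = p + 1 := ⟨m - 1, (Nat.succ_pred_eq_of_pos hm).symm⟩
    rw [← norm_iteratedFDeriv_fderiv]
    have hfd : (fderiv ℝ (⇑G)) = fun _ : Euc d => G := by
      funext y; exact G.fderiv
    rw [hfd]
    rcases Nat.eq_zero_or_pos p with rfl | hp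
    · rw [norm_iteratedFDeriv_zero]
      calc ‖G‖ ≤ 2 := hGnorm
        _ ≤ (2 + 2*‖x‖)^1 := by rw [pow_one]; linarith
        _ ≤ (2 + 2*‖x‖)^(0+1+1) := by
            apply pow_le_pow_right₀ hD1; omega
    · rw [iteratedFDeriv_const_of_ne (Nat.pos_iff_ne_zero.mp hp)]
      simp only [Pi.zero_apply, norm_zero]
      positivity

lemma st17u_bound_all (n : ℕ) : ∃ B : ℝ, 0 ≤ B ∧ ∀ i ≤ n, ∀ t : ℝ, 2 ≤ t →
    ‖iteratedFDeriv ℝ i st17u t‖ ≤ B * Real.exp (-Real.sqrt t) := by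
  induction n with
  | zero =>
    obtain ⟨B, hB0, hB⟩ := st17u_bound 0
    exact ⟨B, hB0, fun i hi t ht => by rw [Nat.le_zero.mp hi]; exact hB t ht⟩
  | succ n ih =>
    obtain ⟨B, hB0, hB⟩ := ih
    obtain ⟨B', hB'0, hB'⟩ := st17u_bound (n+1)
    refine ⟨max B B', le_trans hB0 (le_max_left _ _), fun i hi t ht => ?_⟩
    rcases Nat.lt_succ_iff_lt_or_eq.mp (Nat.lt_succ_of_le hi) with h | rfl
    · exact le_trans (hB i (Nat.lt_succ_iff.mp h) t ht)
        (by have := Real.exp_pos (-Real.sqrt t); nlinarith [le_max_left B B'])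
    · exact le_trans (hB' t ht)
        (by have := Real.exp_pos (-Real.sqrt t); nlinarith [le_max_right B B'])

/-- The function `κ` itself: `st17kap d x = st17u (‖x‖²)`. -/
def st17kap (d : ℕ) : Euc d → ℝ := st17u ∘ (fun y : Euc d => ‖y‖^2)

lemma st17kap_contDiff (d : ℕ) : ContDiff ℝ ∞ (st17kap d) :=
  st17u_contDiff.comp (contDiff_norm_sq ℝ)

lemma st17kap_pos (d : ℕ) (x : Euc d) : 0 < st17kap d x := st17u_pos _

lemma st17kap_eq (d : ℕ) {x : Euc d} (hx : 1 ≤ ‖x‖) : st17kap d x = Real.exp (-‖x‖) := by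
  have h1 : (1:ℝ) ≤ ‖x‖^2 := by nlinarith
  rw [st17kap, Function.comp_apply, st17u_eq h1, Real.sqrt_sq (norm_nonneg x)]

lemma st17kap_decay (d : ℕ) (k n : ℕ) : ∃ C : ℝ, ∀ x : Euc d,
    ‖x‖ ^ k * ‖iteratedFDeriv ℝ n (st17kap d) x‖ ≤ C := by
  obtain ⟨B, hB0, hB⟩ := st17u_bound_all n
  have hcont : Continuous (iteratedFDeriv ℝ n (st17kap d)) :=
    (st17kap_contDiff d).continuous_iteratedFDeriv (by exact_mod_cast le_top)
  obtain ⟨M, hM⟩ := (isCompact_closedBall (0 : Euc d) 2).exists_bound_of_continuousOn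
    hcont.continuousOn
  refine ⟨max (2^k * M) ((n.factorial : ℝ) * B * 3^n * ((k+n).factorial : ℝ)), fun x => ?_⟩
  rcases le_or_gt ‖x‖ 2 with hx | hx
  · refine le_trans ?_ (le_max_left _ _)
    have hMx : ‖iteratedFDeriv ℝ n (st17kap d) x‖ ≤ M := by
      apply hM; simpa [Metric.mem_closedBall, dist_eq_norm] using hx
    have h1 : ‖x‖^k ≤ 2^k := pow_le_pow_left₀ (norm_nonneg x) hx k
    have h2 : (0:ℝ) ≤ ‖iteratedFDeriv ℝ n (st17kap d) x‖ := norm_nonneg _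
    nlinarith [pow_nonneg (norm_nonneg x) k]
  · refine le_trans ?_ (le_max_right _ _)
    have hx0 : (0:ℝ) < ‖x‖ := by linarith
    have hq2 : (2:ℝ) ≤ ‖x‖^2 := by nlinarith
    have hsq : Real.sqrt (‖x‖^2) = ‖x‖ := Real.sqrt_sq (norm_nonneg x)
    have hcomp : ‖iteratedFDeriv ℝ n (st17kap d) x‖ ≤
        (n.factorial : ℝ) * (B * Real.exp (-‖x‖)) * (2 + 2*‖x‖)^n := by
      apply norm_iteratedFDeriv_comp_le (g := st17u) (f := fun y : Euc d => ‖y‖^2)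
        (N := ∞) st17u_contDiff (contDiff_norm_sq ℝ) (by exact_mod_cast le_top) x
      · intro i hi
        have := hB i hi (‖x‖^2) hq2
        rwa [hsq] at this
      · intro i hi1 hin
        exact st17q_deriv_bound d i hi1 x
    have h3 : (2 + 2*‖x‖) ^ n ≤ (3*‖x‖)^n := by
      apply pow_le_pow_left₀ (by linarith) (by linarith)
    have hexp : ‖x‖^(k+n) * Real.exp (-‖x‖) ≤ ((k+n).factorial : ℝ) := by
      have h := Real.pow_div_factorial_le_exp (x := ‖x‖) (le_of_lt hx0) (k+n)
      rw [div_le_iff₀ (by positivity)] at h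
      rw [Real.exp_neg]
      rw [mul_inv_le_iff₀ (Real.exp_pos _)]
      linarith [h]
    calc ‖x‖^k * ‖iteratedFDeriv ℝ n (st17kap d) x‖
        ≤ ‖x‖^k * ((n.factorial : ℝ) * (B * Real.exp (-‖x‖)) * (2 + 2*‖x‖)^n) := by
          apply mul_le_mul_of_nonneg_left hcomp (by positivity)
      _ ≤ ‖x‖^k * ((n.factorial : ℝ) * (B * Real.exp (-‖x‖)) * (3*‖x‖)^n) := by
          apply mul_le_mul_of_nonneg_left _ (by positivity)
          apply mul_le_mul_of_nonneg_left h3 (by positivity)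
      _ = (n.factorial : ℝ) * B * 3^n * (‖x‖^(k+n) * Real.exp (-‖x‖)) := by
          rw [mul_pow, pow_add]; ring
      _ ≤ (n.factorial : ℝ) * B * 3^n * ((k+n).factorial : ℝ) := by
          apply mul_le_mul_of_nonneg_left hexp (by positivity)

/-- The Schwartz function `κ` of Statement 17. -/
def st17schwartz (d : ℕ) : SchwartzMap (Euc d) ℝ :=
  ⟨st17kap d, st17kap_contDiff d, st17kap_decay d⟩

lemma st17schwartz_pos (d : ℕ) (x : Euc d) : 0 < st17schwartz d x := st17kap_pos d x

lemma st17schwartz_eq (d : ℕ) {x : Euc d} (hx : 1 ≤ ‖x‖) :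
    st17schwartz d x = Real.exp (-‖x‖) := st17kap_eq d hx

lemma st17_hasFDerivAt_norm (d : ℕ) {x : Euc d} (hx : x ≠ 0) :
    HasFDerivAt (fun y : Euc d => ‖y‖) (‖x‖⁻¹ • (innerSL ℝ x)) x := by
  have hx0 : (0:ℝ) < ‖x‖ := norm_pos_iff.mpr hx
  have h1 : HasFDerivAt (fun y : Euc d => ‖y‖^2) ((2:ℕ) • innerSL ℝ x) x :=
    (hasStrictFDerivAt_norm_sq x).hasFDerivAt
  have h2 : HasDerivAt Real.sqrt (1/(2*Real.sqrt (‖x‖^2))) (‖x‖^2) :=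
    Real.hasDerivAt_sqrt (by positivity)
  have h3 := h2.comp_hasFDerivAt x h1
  have h4 : HasFDerivAt (fun y : Euc d => ‖y‖)
      ((1/(2*Real.sqrt (‖x‖^2))) • ((2:ℕ) • innerSL ℝ x)) x := by
    apply h3.congr_of_eventuallyEq
    filter_upwards with y
    simp [Real.sqrt_sq (norm_nonneg y)]
  convert h4 using 1
  rw [Real.sqrt_sq (norm_nonneg x), smul_comm]
  ext y
  simp only [ContinuousLinearMap.smul_apply]
  rw [nsmul_eq_mul]
  push_cast
  field_simp
  ring

lemma st17_out_fderiv (d : ℕ) (κ : Euc d → ℝ)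
    (hκ : ∀ y : Euc d, 1 < ‖y‖ → κ y = Real.exp (-‖y‖)) {x : Euc d} (hx : 1 < ‖x‖) :
    fderiv ℝ κ x = (-(Real.exp (-‖x‖) * ‖x‖⁻¹)) • (innerSL ℝ x) := by
  have hx0 : x ≠ 0 := by intro h; rw [h] at hx; simp at hx; linarith
  have hN := st17_hasFDerivAt_norm d hx0
  have hF : HasFDerivAt (fun y : Euc d => Real.exp (-‖y‖))
      (Real.exp (-‖x‖) • (-(‖x‖⁻¹ • (innerSL ℝ x)))) x :=
    (Real.hasDerivAt_exp (-‖x‖)).comp_hasFDerivAt x (f := fun y : Euc d => -‖y‖) hN.neg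
  have hev : κ =ᶠ[nhds x] fun y : Euc d => Real.exp (-‖y‖) := by
    filter_upwards [(isOpen_lt continuous_const continuous_norm).mem_nhds hx] with y hy
    exact hκ y hy
  have hκF : HasFDerivAt κ (Real.exp (-‖x‖) • (-(‖x‖⁻¹ • (innerSL ℝ x)))) x :=
    hF.congr_of_eventuallyEq hev
  rw [hκF.fderiv]
  ext y
  simp only [ContinuousLinearMap.smul_apply, ContinuousLinearMap.neg_apply, smul_eq_mul]
  ring

lemma st17_grad_out (d : ℕ) (κ : Euc d → ℝ)
    (hκ : ∀ y : Euc d, 1 < ‖y‖ → κ y = Real.exp (-‖y‖)) {x : Euc d} (hx : 1 < ‖x‖) :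
    ‖gradient κ x‖ = Real.exp (-‖x‖) := by
  have hx0 : (0:ℝ) < ‖x‖ := by linarith
  rw [gradient]
  rw [LinearIsometryEquiv.norm_map]
  rw [st17_out_fderiv d κ hκ hx]
  rw [norm_smul, innerSL_apply_norm]
  rw [Real.norm_eq_abs, abs_neg, abs_mul, abs_of_pos (Real.exp_pos _),
    abs_of_pos (by positivity : (0:ℝ) < ‖x‖⁻¹)]
  field_simp

lemma st17_lap_out (d : ℕ) (κ : Euc d → ℝ)
    (hκ : ∀ y : Euc d, 1 < ‖y‖ → κ y = Real.exp (-‖y‖)) {x : Euc d} (hx : 1 < ‖x‖) :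
    lap d κ x = Real.exp (-‖x‖) * (1 + (1 - (d:ℝ)) * ‖x‖⁻¹) := by
  have hr0 : (0:ℝ) < ‖x‖ := by linarith
  have hx0 : x ≠ 0 := by intro h; rw [h] at hx; simp at hx; linarith
  have hN := st17_hasFDerivAt_norm d hx0
  have key : ∀ i : Fin d,
      fderiv ℝ (fun y => fderiv ℝ κ y (EuclideanSpace.single i 1)) x
        (EuclideanSpace.single i 1)
      = Real.exp (-‖x‖) * ((x i)^2 * ((‖x‖⁻¹)^3 + (‖x‖⁻¹)^2) - ‖x‖⁻¹) := by
    intro i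
    have hev : (fun y => fderiv ℝ κ y (EuclideanSpace.single i 1)) =ᶠ[nhds x]
        (fun y : Euc d => -(Real.exp (-‖y‖) * ‖y‖⁻¹ * y i)) := by
      filter_upwards [(isOpen_lt continuous_const continuous_norm).mem_nhds hx] with y hy
      rw [st17_out_fderiv d κ hκ hy]
      simp only [ContinuousLinearMap.smul_apply, smul_eq_mul, innerSL_apply_apply,
        EuclideanSpace.inner_single_right, map_one, conj_trivial]
      ring
    rw [hev.fderiv_eq]
    have ha : HasFDerivAt (fun y : Euc d => Real.exp (-‖y‖))
        (Real.exp (-‖x‖) • (-(‖x‖⁻¹ • innerSL ℝ x))) x :=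
      (Real.hasDerivAt_exp (-‖x‖)).comp_hasFDerivAt x (f := fun y : Euc d => -‖y‖) hN.neg
    have hb : HasFDerivAt (fun y : Euc d => ‖y‖⁻¹)
        ((-(‖x‖^2)⁻¹) • (‖x‖⁻¹ • innerSL ℝ x)) x :=
      (hasDerivAt_inv (ne_of_gt hr0)).comp_hasFDerivAt x hN
    have hc : HasFDerivAt (fun y : Euc d => y i)
        (EuclideanSpace.proj (𝕜 := ℝ) i) x :=
      (EuclideanSpace.proj (𝕜 := ℝ) i).hasFDerivAt
    have hprod := ((ha.mul hb).mul hc).neg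
    rw [(show HasFDerivAt (fun y : Euc d => -(Real.exp (-‖y‖) * ‖y‖⁻¹ * y i)) _ x from hprod).fderiv]
    simp only [ContinuousLinearMap.neg_apply, ContinuousLinearMap.add_apply,
      ContinuousLinearMap.smul_apply, smul_eq_mul, innerSL_apply_apply,
      EuclideanSpace.inner_single_right, map_one, conj_trivial, Pi.mul_apply
      ]
    have hproj : (EuclideanSpace.proj (𝕜 := ℝ) i) (EuclideanSpace.single i (1:ℝ)) = 1 := by
      simp [EuclideanSpace.single_apply]
    rw [hproj]
    ring
  rw [lap]
  rw [Finset.sum_congr rfl (fun i _ => key i)]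
  rw [← Finset.mul_sum]
  have hsum : ∑ i : Fin d, ((x i)^2 * ((‖x‖⁻¹)^3 + (‖x‖⁻¹)^2) - ‖x‖⁻¹)
      = ‖x‖^2 * ((‖x‖⁻¹)^3 + (‖x‖⁻¹)^2) - d * ‖x‖⁻¹ := by
    rw [Finset.sum_sub_distrib, ← Finset.sum_mul]
    have : ∑ i : Fin d, (x i)^2 = ‖x‖^2 := by
      rw [EuclideanSpace.norm_eq, Real.sq_sqrt (by positivity)]
      simp [Real.norm_eq_abs, sq_abs]
    rw [this]
    simp
  rw [hsum]
  have hne : ‖x‖ ≠ 0 := ne_of_gt hr0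
  field_simp
  ring


/-- there is a strictly positive Schwartz function `κ` on `ℝ^d` with
`κ(x) = e^{-|x|}` for `|x| > 1`; moreover for any such `κ` there is `C > 0` with
`|∇κ|² ≤ C κ` and `|Δκ| ≤ C κ` everywhere. -/
theorem statement17 (d : ℕ) (hd : 1 ≤ d) :
    (∃ κ : SchwartzMap (Euc d) ℝ, (∀ x, 0 < κ x) ∧
      ∀ x, 1 < ‖x‖ → κ x = Real.exp (-‖x‖)) ∧
    (∀ κ : SchwartzMap (Euc d) ℝ, (∀ x, 0 < κ x) →
      (∀ x, 1 < ‖x‖ → κ x = Real.exp (-‖x‖)) →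
      ∃ C > (0 : ℝ), ∀ x,
        ‖gradient (fun y => κ y) x‖ ^ 2 ≤ C * κ x ∧
        |lap d (fun y => κ y) x| ≤ C * κ x) := by
  constructor
  · exact ⟨st17schwartz d, st17schwartz_pos d, fun x hx => st17schwartz_eq d hx.le⟩
  · intro κ hpos hout
    set f : Euc d → ℝ := fun y => κ y with hf
    have hsm : ContDiff ℝ ∞ f := κ.smooth ⊤
    have hinfty : (∞ : WithTop ℕ∞) + 1 ≤ ∞ := by
      exact_mod_cast le_top
    have hone : (1 : WithTop ℕ∞) ≤ ∞ := by exact_mod_cast le_top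
    have hgradeq : ∀ x, ‖gradient f x‖ = ‖fderiv ℝ f x‖ := fun x => by
      rw [gradient]; simp
    have hcont1 : Continuous fun x => ‖gradient f x‖ ^ 2 := by
      have : Continuous fun x => ‖fderiv ℝ f x‖ ^ 2 :=
        ((hsm.continuous_fderiv (by simp)).norm.pow 2)
      refine this.congr fun x => ?_
      rw [hgradeq x]
    have hcontlap : Continuous (lap d f) := by
      apply continuous_finset_sum
      intro i _
      have hgi : ContDiff ℝ ∞ (fun y => fderiv ℝ f y (EuclideanSpace.single i 1)) :=
        (hsm.fderiv_right hinfty).clm_apply contDiff_const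
      exact (hgi.continuous_fderiv (by simp)).clm_apply continuous_const
    obtain ⟨M₁, hM₁⟩ := (isCompact_closedBall (0:Euc d) 2).exists_bound_of_continuousOn
      hcont1.continuousOn
    obtain ⟨M₂, hM₂⟩ := (isCompact_closedBall (0:Euc d) 2).exists_bound_of_continuousOn
      hcontlap.continuousOn
    obtain ⟨x₀, hx₀mem, hx₀min⟩ := (isCompact_closedBall (0:Euc d) 2).exists_isMinOn
      (⟨0, by simp⟩ : (Metric.closedBall (0:Euc d) 2).Nonempty) κ.continuous.continuousOn
    set m := f x₀ with hm_def
    have hm : 0 < m := hpos x₀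
    set M : ℝ := max M₁ M₂ with hM_def
    have h0mem : (0 : Euc d) ∈ Metric.closedBall (0:Euc d) 2 := by simp
    have hM0 : 0 ≤ M := le_trans (by positivity : (0:ℝ) ≤ ‖gradient f 0‖^2)
      (le_trans (le_of_abs_le (by simpa using hM₁ 0 h0mem)) (le_max_left _ _))
    set C : ℝ := M/m + d + 1 with hC_def
    have hC1 : (1:ℝ) + d ≤ C := by
      have : 0 ≤ M/m := by positivity
      rw [hC_def]; linarith
    refine ⟨C, by positivity, fun x => ?_⟩
    rcases le_or_gt ‖x‖ 2 with hx | hx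
    · have hxmem : x ∈ Metric.closedBall (0:Euc d) 2 := by
        simpa [Metric.mem_closedBall, dist_eq_norm] using hx
      have hmin : m ≤ f x := hx₀min hxmem
      have hMm : M ≤ C * f x := by
        have h1 : (M/m) * m = M := div_mul_cancel₀ M (ne_of_gt hm)
        have h2 : (M/m) * m ≤ (M/m) * f x :=
          mul_le_mul_of_nonneg_left hmin (by positivity)
        have h3 : (M/m) * f x ≤ C * f x := by
          apply mul_le_mul_of_nonneg_right _ (le_of_lt (hpos x))
          rw [hC_def]; have : (0:ℝ) ≤ d := Nat.cast_nonneg d; linarith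
        calc M = (M/m) * m := h1.symm
          _ ≤ (M/m) * f x := h2
          _ ≤ C * f x := h3
      constructor
      · calc ‖gradient f x‖^2 ≤ M₁ := le_of_abs_le (by simpa using hM₁ x hxmem)
          _ ≤ M := le_max_left _ _
          _ ≤ C * f x := hMm
      · calc |lap d f x| ≤ M₂ := by simpa using hM₂ x hxmem
          _ ≤ M := le_max_right _ _
          _ ≤ C * f x := hMm
    · have hx1 : 1 < ‖x‖ := by linarith
      have hfx : f x = Real.exp (-‖x‖) := hout x hx1
      have hκx : κ x = f x := rfl
      have hexp1 : Real.exp (-‖x‖) ≤ 1 := Real.exp_le_one_iff.mpr (by linarith)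
      have hexp0 : 0 < Real.exp (-‖x‖) := Real.exp_pos _
      constructor
      · rw [st17_grad_out d f hout hx1, hκx, hfx]
        have : Real.exp (-‖x‖) ^ 2 ≤ 1 * Real.exp (-‖x‖) := by nlinarith
        calc Real.exp (-‖x‖) ^ 2 ≤ 1 * Real.exp (-‖x‖) := this
          _ ≤ C * Real.exp (-‖x‖) := by
            apply mul_le_mul_of_nonneg_right _ (le_of_lt hexp0)
            have : (0:ℝ) ≤ d := Nat.cast_nonneg d; linarith
      · rw [st17_lap_out d f hout hx1, hκx, hfx]
        have hrinv0 : 0 < ‖x‖⁻¹ := by positivity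
        have hrinv1 : ‖x‖⁻¹ < 1 := by
          rw [inv_lt_one_iff₀]; right; linarith
        have hd0 : (1:ℝ) ≤ d := by exact_mod_cast hd
        have habs : |1 + (1 - (d:ℝ)) * ‖x‖⁻¹| ≤ 1 + d := by
          rw [abs_le]
          constructor <;> nlinarith
        rw [abs_mul, abs_of_pos hexp0]
        calc Real.exp (-‖x‖) * |1 + (1 - (d:ℝ)) * ‖x‖⁻¹|
            ≤ Real.exp (-‖x‖) * (1 + d) := by
              apply mul_le_mul_of_nonneg_left habs (le_of_lt hexp0)
          _ ≤ C * Real.exp (-‖x‖) := by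
              rw [mul_comm]
              apply mul_le_mul_of_nonneg_right hC1 (le_of_lt hexp0)
end
end
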